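/- arXiv:1306.6588 — 4 statements merged into one kernel-verified Lean document; each statement's English description precedes it below -/
import Mathlib

section
/- Let 𝒳 and 𝒴 be metrizable topological vector spaces, and let Φ : D_Φ ⊆ 𝒳 → 𝒴 be Hadamard differentiable at θ ∈ D_Φ tangentially to a set D₀ ⊆ 𝒳, with derivative Φ'_θ : D₀ → 𝒴. Let X_n : Ω_n → D_Φ, n ≥ 1, be a sequence of maps on probability spaces (Ω_n, 𝓕_n, P_n), and let {r_n} be positive reals with r_n → ∞. If {r_n(X_n − θ)} satisfies the large deviation principle in 𝒳 with speed c_n^{-1} and rate function I such that {x : I(x) < ∞} ⊆ D₀, then {r_n(Φ(X_n) − Φ(θ))} satisfies the large deviation principle in 𝒴 with speed c_n^{-1} and rate function I_{Φ'_θ}(y) = inf{ I(x) : Φ'_θ(x) = y }. -/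
open MeasureTheory ProbabilityTheory Filter Set
open scoped Topology UniformConvergence ENNReal NNReal

noncomputable section

/-- Integral of a bounded measurable real function against a finite signed measure,
defined via the Jordan decomposition. -/
def smInt {E : Type*} [MeasurableSpace E] (η : SignedMeasure E) (f : E → ℝ) : ℝ :=
  (∫ x, f x ∂η.toJordanDecomposition.posPart) - ∫ x, f x ∂η.toJordanDecomposition.negPart

/-- `η ∈ M_b^{ν,0}`: a finite signed measure which is absolutely continuous with respect
to `ν` and has total mass zero. -/
def MemMb0 {E : Type*} [MeasurableSpace E] (ν : Measure E) (η : SignedMeasure E) : Prop :=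
  η ≪ᵥ ν.toENNRealVectorMeasure ∧ η Set.univ = 0

/-- The moderate deviation rate functional `I_ν(η) = (1/2)∫ (dη/dν)² dν` for
`η ∈ M_b^{ν,0}`, and `+∞` otherwise. -/
def rateFn {E : Type*} [MeasurableSpace E] (ν : Measure E) (η : SignedMeasure E) : ℝ≥0∞ :=
  letI := Classical.propDecidable (MemMb0 ν η)
  if MemMb0 ν η then 2⁻¹ * ∫⁻ x, ENNReal.ofReal ((η.rnDeriv ν x) ^ 2) ∂ν else ⊤

/-- A sequence of (possibly non-measurable) maps `Y n : Ω n → X` on probability spaces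
satisfies the large deviation principle with speed `(c n)⁻¹` and rate function `I`:
`I` is lower semicontinuous with compact level sets and for every set `A`,
`-inf_{interior A} I ≤ liminf (c n)⁻¹ log P_{n*}(Y n ∈ A)` and
`limsup (c n)⁻¹ log P_n^*(Y n ∈ A) ≤ -inf_{closure A} I`, where outer probability is the
outer measure of the set and inner probability of `B` is `1 - P(Bᶜ)` (outer). -/
def SatisfiesLDP {X : Type*} [TopologicalSpace X] {Ω : ℕ → Type*}
    [∀ n, MeasurableSpace (Ω n)] (P : ∀ n, Measure (Ω n))
    (Y : ∀ n, Ω n → X) (c : ℕ → ℝ) (I : X → ℝ≥0∞) : Prop :=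
  LowerSemicontinuous I ∧
  (∀ r : ℝ≥0∞, r ≠ ⊤ → IsCompact {x | I x ≤ r}) ∧
  ∀ A : Set X,
    (-(⨅ x ∈ interior A, (I x : EReal)) ≤
      Filter.liminf
        (fun n => (((c n)⁻¹ : ℝ) : EReal) * ENNReal.log (1 - P n (((Y n) ⁻¹' A)ᶜ)))
        Filter.atTop) ∧
    (Filter.limsup
        (fun n => (((c n)⁻¹ : ℝ) : EReal) * ENNReal.log (P n ((Y n) ⁻¹' A)))
        Filter.atTop ≤
      -(⨅ x ∈ closure A, (I x : EReal)))

/-- Condition (2.1): there are `A ≥ 1` and `δ ∈ (0,1)` with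
`λ_{nk} ≤ A k^{-(δ - 1/2)} λ_n` for all `n, k ≥ 1`. -/
def Cond21 (lam : ℕ → ℝ) : Prop :=
  ∃ A : ℝ, 1 ≤ A ∧ ∃ d : ℝ, d ∈ Set.Ioo (0 : ℝ) 1 ∧
    ∀ n k : ℕ, 1 ≤ n → 1 ≤ k → lam (n * k) ≤ A * (k : ℝ) ^ (-(d - 1 / 2)) * lam n

/-- The scaling sequence: `λ_n` increasing to `∞` with `λ_n = o(√n)`; `b_n = √n / λ_n`. -/
structure ModerateScale (lam : ℕ → ℝ) : Prop where
  pos : ∀ n, 0 < lam n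
  mono : StrictMono lam
  tendsto : Filter.Tendsto lam Filter.atTop Filter.atTop
  littleO : (fun n => lam n) =o[Filter.atTop] (fun n : ℕ => Real.sqrt n)

/-- Hadamard differentiability of `Φ : D_Φ ⊆ 𝒳 → 𝒴` at `θ` tangentially to `D₀`, with
(continuous) derivative `Φ'` defined on `D₀`. -/
def HadamardDiffAt {𝒳 𝒴 : Type*} [AddCommGroup 𝒳] [Module ℝ 𝒳] [TopologicalSpace 𝒳]
    [AddCommGroup 𝒴] [Module ℝ 𝒴] [TopologicalSpace 𝒴]
    (D : Set 𝒳) (Φ : 𝒳 → 𝒴) (θ : 𝒳) (D₀ : Set 𝒳) (Φ' : 𝒳 → 𝒴) : Prop :=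
  ContinuousOn Φ' D₀ ∧
  ∀ h ∈ D₀, ∀ t : ℕ → ℝ, ∀ hs : ℕ → 𝒳,
    (∀ n, t n ≠ 0) → Filter.Tendsto t Filter.atTop (𝓝 0) →
    Filter.Tendsto hs Filter.atTop (𝓝 h) →
    (∀ n, θ + t n • hs n ∈ D) →
    Filter.Tendsto (fun n => (t n)⁻¹ • (Φ (θ + t n • hs n) - Φ θ))
      Filter.atTop (𝓝 (Φ' h))

private lemma ldp_attain {𝒳 𝒴 : Type*} [MetricSpace 𝒳] [TopologicalSpace 𝒴] [T2Space 𝒴]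
    {D₀ : Set 𝒳} {Φ' : 𝒳 → 𝒴} (hcont : ContinuousOn Φ' D₀)
    {I : 𝒳 → ℝ≥0∞} (hI : {x | I x < ⊤} ⊆ D₀)
    (hlsc : LowerSemicontinuous I) (hcomp : ∀ ρ : ℝ≥0∞, ρ ≠ ⊤ → IsCompact {x | I x ≤ ρ})
    (y : 𝒴) (hy : (⨅ (x : 𝒳) (_ : Φ' x = y), I x) ≠ ⊤) :
    ∃ x : 𝒳, Φ' x = y ∧ I x ≤ ⨅ (x : 𝒳) (_ : Φ' x = y), I x := by
  set L : ℝ≥0∞ := ⨅ (x : 𝒳) (_ : Φ' x = y), I x with hL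
  have hseq : ∀ k : ℕ, ∃ x : 𝒳, Φ' x = y ∧ I x < L + ((k : ℝ≥0∞) + 1)⁻¹ := by
    intro k
    have h1 : L < L + ((k : ℝ≥0∞) + 1)⁻¹ := by
      refine ENNReal.lt_add_right hy ?_
      simp
    rw [hL] at h1
    simp only [iInf_lt_iff] at h1
    obtain ⟨x, hx, hlt⟩ := h1
    exact ⟨x, hx, hlt⟩
  choose u hu1 hu2 using hseq
  have humem : ∀ k, u k ∈ {x | I x ≤ L + 1} := by
    intro k
    refine le_trans (hu2 k).le (add_le_add le_rfl ?_)
    simpa using ENNReal.inv_le_one.2 (by simp)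
  have hScomp : IsCompact {x : 𝒳 | I x ≤ L + 1} :=
    hcomp _ (by simp [ENNReal.add_ne_top, hy])
  obtain ⟨x₀, hx₀S, φ, hφ, hconv⟩ := hScomp.tendsto_subseq humem
  have hIx₀ : I x₀ ≤ L := by
    by_contra hgt
    push_neg at hgt
    obtain ⟨b, hb1, hb2⟩ := exists_between hgt
    have hev1 : ∀ᶠ k in atTop, b < I (u (φ k)) :=
      hconv.eventually (hlsc x₀ b hb2)
    obtain ⟨n₀, hn₀⟩ := ENNReal.exists_inv_nat_lt (a := b - L) (by
      simp [tsub_eq_zero_iff_le, not_le.2 hb1])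
    have hev2 : ∀ᶠ k in atTop, ((φ k : ℝ≥0∞) + 1)⁻¹ ≤ ((n₀ : ℝ≥0∞))⁻¹ := by
      filter_upwards [eventually_ge_atTop n₀] with k hk
      refine ENNReal.inv_le_inv.2 ?_
      have h3 : (n₀ : ℝ≥0∞) ≤ (k : ℝ≥0∞) := by exact_mod_cast hk
      calc (n₀ : ℝ≥0∞) ≤ (k : ℝ≥0∞) := h3
        _ ≤ (φ k : ℝ≥0∞) := by exact_mod_cast hφ.le_apply
        _ ≤ (φ k : ℝ≥0∞) + 1 := le_self_add
    obtain ⟨k, hk1, hk2⟩ := (hev1.and hev2).exists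
    have hLb : L + ((n₀ : ℝ≥0∞))⁻¹ < b := by
      calc L + ((n₀ : ℝ≥0∞))⁻¹ < L + (b - L) :=
            ENNReal.add_lt_add_left hy hn₀
        _ = b := add_tsub_cancel_of_le hb1.le
    have hlt : I (u (φ k)) < b :=
      lt_trans (lt_of_lt_of_le (hu2 (φ k)) (add_le_add le_rfl hk2)) hLb
    exact absurd hk1 (not_lt.2 hlt.le)
  have hLtop : L + 1 < ⊤ :=
    lt_top_iff_ne_top.2 (ENNReal.add_ne_top.2 ⟨hy, ENNReal.one_ne_top⟩)
  have hx₀D : x₀ ∈ D₀ := hI (lt_of_le_of_lt hx₀S hLtop)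
  have huD : ∀ k, u (φ k) ∈ D₀ := fun k => hI (lt_of_le_of_lt (humem (φ k)) hLtop)
  have hΦ'conv : Tendsto (fun k => Φ' (u (φ k))) atTop (𝓝 (Φ' x₀)) := by
    refine (hcont x₀ hx₀D).tendsto.comp ?_
    rw [tendsto_nhdsWithin_iff]
    exact ⟨hconv, Eventually.of_forall huD⟩
  have hcy : Tendsto (fun _ : ℕ => y) atTop (𝓝 (Φ' x₀)) := by
    refine hΦ'conv.congr fun k => ?_
    rw [hu1]
  exact ⟨x₀, (tendsto_nhds_unique tendsto_const_nhds hcy).symm, hIx₀⟩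

private lemma ldp_key {𝒳 𝒴 : Type*}
    [AddCommGroup 𝒳] [Module ℝ 𝒳] [MetricSpace 𝒳]
    [AddCommGroup 𝒴] [Module ℝ 𝒴] [MetricSpace 𝒴]
    {DΦ : Set 𝒳} {Φ : 𝒳 → 𝒴} {θ : 𝒳} {D₀ : Set 𝒳} {Φ' : 𝒳 → 𝒴}
    (hHad : HadamardDiffAt DΦ Φ θ D₀ Φ')
    {r : ℕ → ℝ} (hrpos : ∀ n, 0 < r n) (hr : Filter.Tendsto r Filter.atTop Filter.atTop)
    {K : Set 𝒳} (hKne : K.Nonempty) (hKc : IsCompact K) (hKD : K ⊆ D₀)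
    {ε : ℝ} (hε : 0 < ε) :
    ∃ δ : ℝ, 0 < δ ∧ ∃ N : ℕ, ∀ n, N ≤ n → ∀ z : 𝒳, Metric.infDist z K < δ →
      θ + (r n)⁻¹ • z ∈ DΦ →
      ∃ h ∈ K, dist (r n • (Φ (θ + (r n)⁻¹ • z) - Φ θ)) (Φ' h) < ε := by
  by_contra hcon
  push_neg at hcon
  have hcon' : ∀ k : ℕ, ∃ n, k ≤ n ∧ ∃ z : 𝒳,
      Metric.infDist z K < ((k : ℝ) + 1)⁻¹ ∧ θ + (r n)⁻¹ • z ∈ DΦ ∧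
      ∀ h ∈ K, ε ≤ dist (r n • (Φ (θ + (r n)⁻¹ • z) - Φ θ)) (Φ' h) := by
    intro k
    obtain ⟨n, hn, z, hz⟩ := hcon (((k : ℝ) + 1)⁻¹) (by positivity) k
    exact ⟨n, hn, z, hz⟩
  choose n hnk z hz1 hz2 hz3 using hcon'
  choose h hhK hdzh using fun k => (Metric.infDist_lt_iff hKne).1 (hz1 k)
  obtain ⟨h₀, hh₀K, φ, hφ, hconv⟩ := hKc.tendsto_subseq hhK
  have hdist0 : Tendsto (fun j => dist (z (φ j)) h₀) atTop (𝓝 0) := by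
    have hb : ∀ j, dist (z (φ j)) h₀ ≤ ((φ j : ℝ) + 1)⁻¹ + dist (h (φ j)) h₀ := by
      intro j
      calc dist (z (φ j)) h₀ ≤ dist (z (φ j)) (h (φ j)) + dist (h (φ j)) h₀ :=
            dist_triangle _ _ _
        _ ≤ ((φ j : ℝ) + 1)⁻¹ + dist (h (φ j)) h₀ :=
            add_le_add (hdzh (φ j)).le le_rfl
    have h1 : Tendsto (fun j => ((φ j : ℝ) + 1)⁻¹) atTop (𝓝 0) := by
      apply Tendsto.inv_tendsto_atTop
      apply tendsto_atTop_add_const_right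
      exact tendsto_natCast_atTop_atTop.comp hφ.tendsto_atTop
    have h2 : Tendsto (fun j => dist (h (φ j)) h₀) atTop (𝓝 0) :=
      tendsto_iff_dist_tendsto_zero.1 hconv
    have h3 := h1.add h2
    rw [add_zero] at h3
    exact squeeze_zero (fun j => dist_nonneg) hb h3
  have hzconv : Tendsto (fun j => z (φ j)) atTop (𝓝 h₀) :=
    tendsto_iff_dist_tendsto_zero.2 hdist0
  have hn_at : Tendsto (fun j => n (φ j)) atTop atTop :=
    tendsto_atTop_mono (fun j => (hφ.le_apply).trans (hnk (φ j))) tendsto_id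
  have hr_at : Tendsto (fun j => r (n (φ j))) atTop atTop := hr.comp hn_at
  have ht0 : Tendsto (fun j => (r (n (φ j)))⁻¹) atTop (𝓝 0) :=
    hr_at.inv_tendsto_atTop
  have hF := hHad.2 h₀ (hKD hh₀K) (fun j => (r (n (φ j)))⁻¹) (fun j => z (φ j))
      (fun j => inv_ne_zero (hrpos _).ne') ht0 hzconv (fun j => hz2 (φ j))
  simp only [inv_inv] at hF
  have hΦ'conv : Tendsto (fun j => Φ' (h (φ j))) atTop (𝓝 (Φ' h₀)) := by
    refine (hHad.1 h₀ (hKD hh₀K)).tendsto.comp ?_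
    rw [tendsto_nhdsWithin_iff]
    exact ⟨hconv, Eventually.of_forall fun j => hKD (hhK (φ j))⟩
  have hdd : Tendsto (fun j =>
      dist (r (n (φ j)) • (Φ (θ + (r (n (φ j)))⁻¹ • z (φ j)) - Φ θ)) (Φ' (h (φ j))))
      atTop (𝓝 0) := by
    have h4 := hF.dist hΦ'conv
    rwa [dist_self] at h4
  have hev : ∀ᶠ j in atTop,
      dist (r (n (φ j)) • (Φ (θ + (r (n (φ j)))⁻¹ • z (φ j)) - Φ θ)) (Φ' (h (φ j))) < ε :=
    hdd.eventually (gt_mem_nhds hε)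
  obtain ⟨j, hj⟩ := hev.exists
  exact absurd (hz3 (φ j) (h (φ j)) (hhK (φ j))) (not_le.2 hj)

private lemma term_mono {c : ℕ → ℝ} (hc : Filter.Tendsto c Filter.atTop Filter.atTop)
    {p q : ℕ → ℝ≥0∞} (h : ∀ᶠ n in atTop, p n ≤ q n) :
    ∀ᶠ n in atTop, (((c n)⁻¹ : ℝ) : EReal) * ENNReal.log (p n) ≤
      (((c n)⁻¹ : ℝ) : EReal) * ENNReal.log (q n) := by
  filter_upwards [h, hc.eventually_ge_atTop 0] with n h1 h2
  exact mul_le_mul_of_nonneg_left (ENNReal.log_monotone h1)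
    (EReal.coe_nonneg.2 (inv_nonneg.2 h2))

private lemma term_limsup_nonpos {c : ℕ → ℝ} (hc : Filter.Tendsto c Filter.atTop Filter.atTop)
    {p : ℕ → ℝ≥0∞} (hp : ∀ n, p n ≤ 1) :
    Filter.limsup (fun n => (((c n)⁻¹ : ℝ) : EReal) * ENNReal.log (p n)) Filter.atTop ≤ 0 := by
  refine Filter.limsup_le_of_le (h := ?_)
  filter_upwards [hc.eventually_ge_atTop 0] with n h2
  calc (((c n)⁻¹ : ℝ) : EReal) * ENNReal.log (p n)
      ≤ (((c n)⁻¹ : ℝ) : EReal) * 0 :=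
        mul_le_mul_of_nonneg_left (ENNReal.log_le_zero_iff.2 (hp n))
          (EReal.coe_nonneg.2 (inv_nonneg.2 h2))
    _ = 0 := mul_zero _

/-- **Delta method for large deviations** (Gao–Zhao, Theorem 3.1, first part).
If `Φ` is Hadamard differentiable at `θ` tangentially to `D₀` and `{r_n(X_n − θ)}`
satisfies the LDP with speed `c_n⁻¹` and rate function `I` with `{I < ∞} ⊆ D₀`, then
`{r_n(Φ(X_n) − Φ(θ))}` satisfies the LDP with speed `c_n⁻¹` and rate function
`I_{Φ'_θ}(y) = inf{I(x) : Φ'_θ(x) = y}`. -/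
theorem delta_method_large_deviations
    {𝒳 𝒴 : Type*}
    [AddCommGroup 𝒳] [Module ℝ 𝒳] [TopologicalSpace 𝒳] [IsTopologicalAddGroup 𝒳]
    [ContinuousSMul ℝ 𝒳] [TopologicalSpace.MetrizableSpace 𝒳]
    [AddCommGroup 𝒴] [Module ℝ 𝒴] [TopologicalSpace 𝒴] [IsTopologicalAddGroup 𝒴]
    [ContinuousSMul ℝ 𝒴] [TopologicalSpace.MetrizableSpace 𝒴]
    (DΦ : Set 𝒳) (Φ : 𝒳 → 𝒴) (θ : 𝒳) (hθ : θ ∈ DΦ) (D₀ : Set 𝒳) (Φ' : 𝒳 → 𝒴)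
    (hHad : HadamardDiffAt DΦ Φ θ D₀ Φ')
    {Ω : ℕ → Type*} [∀ n, MeasurableSpace (Ω n)]
    (P : ∀ n, Measure (Ω n)) [∀ n, IsProbabilityMeasure (P n)]
    (Xn : ∀ n, Ω n → 𝒳) (hXn : ∀ n ω, Xn n ω ∈ DΦ)
    (r : ℕ → ℝ) (hrpos : ∀ n, 0 < r n)
    (hr : Filter.Tendsto r Filter.atTop Filter.atTop)
    (c : ℕ → ℝ) (hc : Filter.Tendsto c Filter.atTop Filter.atTop)
    (I : 𝒳 → ℝ≥0∞) (hI : {x | I x < ⊤} ⊆ D₀)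
    (hLDP : SatisfiesLDP P (fun n ω => r n • (Xn n ω - θ)) c I) :
    SatisfiesLDP P (fun n ω => r n • (Φ (Xn n ω) - Φ θ)) c
      (fun y => ⨅ (x : 𝒳) (_ : Φ' x = y), I x) := by
  letI : MetricSpace 𝒳 := TopologicalSpace.metrizableSpaceMetric 𝒳
  letI : MetricSpace 𝒴 := TopologicalSpace.metrizableSpaceMetric 𝒴
  obtain ⟨hIlsc, hIcomp, hIbounds⟩ := hLDP
  have hJle : ∀ x : 𝒳, (⨅ (x' : 𝒳) (_ : Φ' x' = Φ' x), I x') ≤ I x :=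
    fun x => iInf_le_of_le x (iInf_le _ rfl)
  have attain : ∀ y : 𝒴, (⨅ (x : 𝒳) (_ : Φ' x = y), I x) ≠ ⊤ →
      ∃ x : 𝒳, Φ' x = y ∧ I x ≤ ⨅ (x : 𝒳) (_ : Φ' x = y), I x :=
    fun y hy => ldp_attain hHad.1 hI hIlsc hIcomp y hy
  have hlevel : ∀ ρ : ℝ≥0∞, ρ ≠ ⊤ →
      {y : 𝒴 | (⨅ (x : 𝒳) (_ : Φ' x = y), I x) ≤ ρ} = Φ' '' {x | I x ≤ ρ} := by
    intro ρ hρ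
    ext y
    constructor
    · intro hy
      obtain ⟨x, hx1, hx2⟩ := attain y (by
        intro htop
        rw [mem_setOf_eq, htop] at hy
        exact hρ (top_le_iff.1 hy))
      exact ⟨x, hx2.trans hy, hx1⟩
    · rintro ⟨x, hx, rfl⟩
      exact le_trans (hJle x) hx
  have hJcomp : ∀ ρ : ℝ≥0∞, ρ ≠ ⊤ →
      IsCompact {y : 𝒴 | (⨅ (x : 𝒳) (_ : Φ' x = y), I x) ≤ ρ} := by
    intro ρ hρ
    rw [hlevel ρ hρ]
    refine (hIcomp ρ hρ).image_of_continuousOn (hHad.1.mono ?_)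
    intro x hx
    exact hI (lt_of_le_of_lt hx (lt_top_iff_ne_top.2 hρ))
  have hJlsc : LowerSemicontinuous (fun y : 𝒴 => ⨅ (x : 𝒳) (_ : Φ' x = y), I x) := by
    rw [lowerSemicontinuous_iff_isClosed_preimage]
    intro ρ
    rcases eq_or_ne ρ ⊤ with rfl | hρ
    · have huniv : (fun y : 𝒴 => ⨅ (x : 𝒳) (_ : Φ' x = y), I x) ⁻¹' Iic ⊤ = univ := by
        ext y; simp
      rw [huniv]; exact isClosed_univ
    · exact (hJcomp ρ hρ).isClosed
  have hXid : ∀ n (ω : Ω n), θ + (r n)⁻¹ • (r n • (Xn n ω - θ)) = Xn n ω := by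
    intro n ω
    rw [smul_smul, inv_mul_cancel₀ (hrpos n).ne', one_smul]
    abel
  refine ⟨hJlsc, fun ρ hρ => hJcomp ρ hρ, fun A => ⟨?_, ?_⟩⟩
  · -- lower bound
    beta_reduce
    rw [EReal.neg_le]
    refine le_iInf₂ fun y hy => ?_
    rw [EReal.neg_le]
    rcases eq_or_ne (⨅ (x : 𝒳) (_ : Φ' x = y), I x) ⊤ with hJy | hJy
    · calc -(((⨅ (x : 𝒳) (_ : Φ' x = y), I x : ℝ≥0∞)) : EReal) = ⊥ := by
            rw [hJy, EReal.coe_ennreal_top, EReal.neg_top]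
        _ ≤ _ := bot_le
    · obtain ⟨x₀, hx₀Φ, hx₀I⟩ := attain y hJy
      have hx₀D : x₀ ∈ D₀ := hI (lt_of_le_of_lt hx₀I (lt_top_iff_ne_top.2 hJy))
      obtain ⟨ε, hε, hball⟩ := Metric.isOpen_iff.1 isOpen_interior y hy
      obtain ⟨δ, hδ, N, hkey⟩ := ldp_key hHad hrpos hr (Set.singleton_nonempty x₀)
        isCompact_singleton (by simpa using hx₀D) hε
      have hsub : ∀ n, N ≤ n → ∀ ω : Ω n,
          r n • (Xn n ω - θ) ∈ Metric.ball x₀ δ → r n • (Φ (Xn n ω) - Φ θ) ∈ A := by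
        intro n hn ω hω
        have h1 : Metric.infDist (r n • (Xn n ω - θ)) {x₀} < δ := by
          rw [Metric.infDist_singleton]
          exact Metric.mem_ball.1 hω
        have h2 : θ + (r n)⁻¹ • (r n • (Xn n ω - θ)) ∈ DΦ := by
          rw [hXid]; exact hXn n ω
        obtain ⟨h, hh, hd⟩ := hkey n hn _ h1 h2
        rw [Set.mem_singleton_iff] at hh
        subst hh
        rw [hXid] at hd
        have hmem : r n • (Φ (Xn n ω) - Φ θ) ∈ Metric.ball y ε := by
          rw [Metric.mem_ball]
          rw [hx₀Φ] at hd
          exact hd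
        exact interior_subset (hball hmem)
      have hple : ∀ᶠ n in atTop,
          (1 : ℝ≥0∞) - P n (((fun ω => r n • (Xn n ω - θ)) ⁻¹' Metric.ball x₀ δ)ᶜ) ≤
          (1 : ℝ≥0∞) - P n (((fun ω => r n • (Φ (Xn n ω) - Φ θ)) ⁻¹' A)ᶜ) := by
        filter_upwards [eventually_ge_atTop N] with n hn
        refine tsub_le_tsub_left (measure_mono ?_) 1
        intro ω hω hmem
        exact hω (hsub n hn ω hmem)
      refine le_trans ?_ (Filter.liminf_le_liminf (term_mono hc hple))
      refine le_trans ?_ (hIbounds (Metric.ball x₀ δ)).1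
      rw [EReal.neg_le_neg_iff]
      refine le_trans (iInf₂_le x₀ ?_) ?_
      · exact mem_interior_iff_mem_nhds.2 (Metric.ball_mem_nhds x₀ hδ)
      · exact EReal.coe_ennreal_le_coe_ennreal_iff.2 hx₀I
  · -- upper bound
    beta_reduce
    have hAF : ∀ᶠ n in atTop,
        (((c n)⁻¹ : ℝ) : EReal) *
          ENNReal.log (P n ((fun ω => r n • (Φ (Xn n ω) - Φ θ)) ⁻¹' A)) ≤
        (((c n)⁻¹ : ℝ) : EReal) *
          ENNReal.log (P n ((fun ω => r n • (Φ (Xn n ω) - Φ θ)) ⁻¹' closure A)) :=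
      term_mono hc (Eventually.of_forall fun n =>
        measure_mono (preimage_mono subset_closure))
    refine le_trans (Filter.limsup_le_limsup hAF) ?_
    rcases (closure A).eq_empty_or_nonempty with hFe | hFne
    · refine Filter.limsup_le_of_le (h := ?_)
      filter_upwards [hc.eventually_gt_atTop 0] with n hn
      have hzero : P n ((fun ω => r n • (Φ (Xn n ω) - Φ θ)) ⁻¹' closure A) = 0 := by
        rw [hFe]; simp
      rw [hzero, ENNReal.log_zero, EReal.mul_bot_of_pos
        (EReal.coe_pos.2 (inv_pos.2 hn))]
      exact bot_le
    · have hlimsup_np : Filter.limsup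
          (fun n => (((c n)⁻¹ : ℝ) : EReal) *
            ENNReal.log (P n ((fun ω => r n • (Φ (Xn n ω) - Φ θ)) ⁻¹' closure A)))
          Filter.atTop ≤ 0 :=
        term_limsup_nonpos hc (fun n => prob_le_one)
      have claim : ∀ α : ℝ≥0∞, 0 < α → α ≠ ⊤ →
          (α : EReal) < ⨅ y ∈ closure A, (((⨅ (x : 𝒳) (_ : Φ' x = y), I x) : ℝ≥0∞) : EReal) →
          Filter.limsup
            (fun n => (((c n)⁻¹ : ℝ) : EReal) *
              ENNReal.log (P n ((fun ω => r n • (Φ (Xn n ω) - Φ θ)) ⁻¹' closure A)))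
            Filter.atTop ≤ -(α : EReal) := by
        intro α hα0 hαt hαL
        have hKne : {x : 𝒳 | I x ≤ α}.Nonempty := by
          have h0 := (hIbounds univ).2
          simp only [preimage_univ, measure_univ, ENNReal.log_one, mul_zero,
            limsup_const] at h0
          have hM : (⨅ x ∈ closure (univ : Set 𝒳), ((I x : ℝ≥0∞) : EReal)) ≤ -(0:EReal) :=
            EReal.le_neg_of_le_neg h0
          rw [neg_zero] at hM
          have hM' : (⨅ x ∈ closure (univ : Set 𝒳), ((I x : ℝ≥0∞) : EReal)) < (α : EReal) :=
            lt_of_le_of_lt hM (EReal.coe_ennreal_pos.2 hα0)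
          simp only [iInf_lt_iff] at hM'
          obtain ⟨x, _, hx⟩ := hM'
          exact ⟨x, (EReal.coe_ennreal_lt_coe_ennreal_iff.1 hx).le⟩
        have hKc := hIcomp α hαt
        have hKD : {x : 𝒳 | I x ≤ α} ⊆ D₀ := fun x hx =>
          hI (lt_of_le_of_lt hx (lt_top_iff_ne_top.2 hαt))
        have hdisj : ∀ x ∈ {x : 𝒳 | I x ≤ α}, Φ' x ∉ closure A := by
          intro x hx hxF
          have h1 : (⨅ y ∈ closure A, (((⨅ (x' : 𝒳) (_ : Φ' x' = y), I x') : ℝ≥0∞) : EReal)) ≤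
              (((⨅ (x' : 𝒳) (_ : Φ' x' = Φ' x), I x') : ℝ≥0∞) : EReal) := iInf₂_le _ hxF
          have h2 : (((⨅ (x' : 𝒳) (_ : Φ' x' = Φ' x), I x') : ℝ≥0∞) : EReal) ≤ (α : EReal) :=
            EReal.coe_ennreal_le_coe_ennreal_iff.2 ((hJle x).trans hx)
          exact absurd (h1.trans h2) (not_le.2 hαL)
        obtain ⟨p₀, hp₀, hp₀min⟩ := (hKc.image_of_continuousOn
            (hHad.1.mono hKD)).exists_isMinOn (hKne.image _)
          (Metric.continuous_infDist_pt (closure A)).continuousOn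
        have hεsep : 0 < Metric.infDist p₀ (closure A) := by
          obtain ⟨x, hx, rfl⟩ := hp₀
          exact (IsClosed.notMem_iff_infDist_pos isClosed_closure hFne).1 (hdisj x hx)
        obtain ⟨δ, hδ, N, hkey⟩ := ldp_key hHad hrpos hr hKne hKc hKD hεsep
        have hsub : ∀ n, N ≤ n → ∀ ω : Ω n,
            r n • (Φ (Xn n ω) - Φ θ) ∈ closure A →
            ¬ (Metric.infDist (r n • (Xn n ω - θ)) {x : 𝒳 | I x ≤ α} < δ) := by
          intro n hn ω hωF hlt
          obtain ⟨h, hh, hd⟩ := hkey n hn _ hlt (by rw [hXid]; exact hXn n ω)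
          rw [hXid] at hd
          have h1 : Metric.infDist (Φ' h) (closure A) ≤
              dist (Φ' h) (r n • (Φ (Xn n ω) - Φ θ)) :=
            Metric.infDist_le_dist_of_mem hωF
          have h2 : Metric.infDist p₀ (closure A) ≤ Metric.infDist (Φ' h) (closure A) :=
            (isMinOn_iff.1 hp₀min) _ (mem_image_of_mem _ hh)
          rw [dist_comm] at hd
          exact absurd hd (not_lt.2 (h2.trans h1))
        have hple : ∀ᶠ n in atTop,
            P n ((fun ω => r n • (Φ (Xn n ω) - Φ θ)) ⁻¹' closure A) ≤
            P n ((fun ω => r n • (Xn n ω - θ)) ⁻¹'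
              {z : 𝒳 | Metric.infDist z {x : 𝒳 | I x ≤ α} < δ}ᶜ) := by
          filter_upwards [eventually_ge_atTop N] with n hn
          exact measure_mono (fun ω hω => hsub n hn ω hω)
        refine le_trans (Filter.limsup_le_limsup (term_mono hc hple)) ?_
        refine le_trans ((hIbounds _).2) ?_
        rw [EReal.neg_le_neg_iff]
        have hGopen : IsOpen {z : 𝒳 | Metric.infDist z {x : 𝒳 | I x ≤ α} < δ} :=
          isOpen_lt (Metric.continuous_infDist_pt _) continuous_const
        refine le_iInf₂ fun x hx => ?_
        have hxc : x ∈ ({z : 𝒳 | Metric.infDist z {x : 𝒳 | I x ≤ α} < δ}ᶜ) :=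
          hGopen.isClosed_compl.closure_subset hx
        refine EReal.coe_ennreal_le_coe_ennreal_iff.2 ?_
        by_contra hlt
        push_neg at hlt
        refine hxc ?_
        have hxK : x ∈ {x : 𝒳 | I x ≤ α} := hlt.le
        show Metric.infDist x {x : 𝒳 | I x ≤ α} < δ
        rw [Metric.infDist_zero_of_mem hxK]
        exact hδ
      -- conclude from the claim
      refine EReal.le_neg_of_le_neg ?_
      by_contra hcc
      rw [not_le] at hcc
      have h0 : (0 : EReal) ≤ -(Filter.limsup
          (fun n => (((c n)⁻¹ : ℝ) : EReal) *
            ENNReal.log (P n ((fun ω => r n • (Φ (Xn n ω) - Φ θ)) ⁻¹' closure A)))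
          Filter.atTop) :=
        EReal.le_neg_of_le_neg (by rwa [neg_zero])
      obtain ⟨β, hβ1, hβ2⟩ := exists_between hcc
      have hβ0 : (0 : EReal) ≤ β := h0.trans hβ1.le
      lift β to ℝ≥0∞ using hβ0 with α hα
      have hαt : α ≠ ⊤ := by
        intro htop
        rw [htop, EReal.coe_ennreal_top] at hβ2
        exact not_top_lt hβ2
      have hα0 : 0 < α := by
        by_contra hz
        push_neg at hz
        rw [le_zero_iff] at hz
        rw [hz, EReal.coe_ennreal_zero] at hβ1
        exact absurd hβ1 (not_lt.2 h0)
      have hcl := claim α hα0 hαt hβ2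
      have h2 : (α : EReal) ≤ -(Filter.limsup
          (fun n => (((c n)⁻¹ : ℝ) : EReal) *
            ENNReal.log (P n ((fun ω => r n • (Φ (Xn n ω) - Φ θ)) ⁻¹' closure A)))
          Filter.atTop) :=
        EReal.le_neg_of_le_neg hcl
      exact absurd h2 (not_le.2 hβ1)
end
end

section
/- Let ν be a probability measure on ℝ, w ≥ 0 measurable, c ∈ ℝ and f₀ > 0. Set q = ∫_{(c,∞)} w dν and suppose V := ∫_{(c,∞)} w² dν − q² satisfies 0 < V < ∞. Then for every δ > 0, inf{ (1/2)∫h² dν : h ∈ L₂(ℝ,ν), ∫h dν = 0, (q/f₀)|∫_{(c,∞)} w h dν| ≥ δ } = (δ²/2) · f₀² / (q² V). -/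
open MeasureTheory Filter Set
open scoped Topology ENNReal

noncomputable section

lemma l2_mul_integrable {ν : Measure ℝ} {u h : ℝ → ℝ}
    (hu : MemLp u 2 ν) (hh : MemLp h 2 ν) :
    Integrable (fun x => u x * h x) ν := by
  refine Integrable.mono' ((hu.integrable_sq.add hh.integrable_sq).div_const 2)
    (hu.aestronglyMeasurable.mul hh.aestronglyMeasurable)
    (Filter.Eventually.of_forall fun x => ?_)
  simp only [Pi.add_apply]
  rw [Real.norm_eq_abs, abs_mul]
  nlinarith [sq_nonneg (|u x| - |h x|), sq_abs (u x), sq_abs (h x), abs_nonneg (u x),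
    abs_nonneg (h x)]

/-- Cauchy–Schwarz for L² functions over a measure. -/
lemma l2_cauchy_schwarz {ν : Measure ℝ} {u h : ℝ → ℝ}
    (hu : MemLp u 2 ν) (hh : MemLp h 2 ν) :
    (∫ x, u x * h x ∂ν) ^ 2 ≤ (∫ x, (u x) ^ 2 ∂ν) * ∫ x, (h x) ^ 2 ∂ν := by
  set A := ∫ x, (u x) ^ 2 ∂ν with hA
  set B := ∫ x, u x * h x ∂ν with hB
  have hA0 : 0 ≤ A := integral_nonneg fun x => sq_nonneg _
  rcases eq_or_lt_of_le hA0 with hA0' | hA0'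
  · -- A = 0 : then u = 0 a.e., so B = 0
    have hu0 := (integral_eq_zero_iff_of_nonneg (fun x => sq_nonneg (u x))
      hu.integrable_sq).1 hA0'.symm
    have hB0 : B = 0 := by
      rw [hB, integral_congr_ae (g := fun _ => (0:ℝ))]
      · simp
      · filter_upwards [hu0] with x hx
        have hx' : u x ^ 2 = 0 := hx
        have : u x = 0 := by nlinarith [sq_nonneg (u x)]
        simp [this]
    rw [hB0]
    have : 0 ≤ ∫ x, (h x) ^ 2 ∂ν := integral_nonneg fun x => sq_nonneg _
    nlinarith
  · -- A > 0: expand ∫ (A h - B u)² ≥ 0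
    have hint_uh : Integrable (fun x => u x * h x) ν := l2_mul_integrable hu hh
    have hexp : ∀ x, (A * h x - B * u x) ^ 2
        = A ^ 2 * (h x) ^ 2 - (2 * A * B) * (u x * h x) + B ^ 2 * (u x) ^ 2 := by
      intro x; ring
    have key : 0 ≤ ∫ x, (A * h x - B * u x) ^ 2 ∂ν :=
      integral_nonneg fun x => sq_nonneg _
    have hI1 : Integrable (fun x => A ^ 2 * (h x) ^ 2 - (2 * A * B) * (u x * h x)) ν :=
      (hh.integrable_sq.const_mul _).sub (hint_uh.const_mul _)
    have hI2 : Integrable (fun x => B ^ 2 * (u x) ^ 2) ν := hu.integrable_sq.const_mul _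
    have hcalc : ∫ x, (A * h x - B * u x) ^ 2 ∂ν
        = A ^ 2 * (∫ x, (h x) ^ 2 ∂ν) - (2 * A * B) * B + B ^ 2 * A := by
      simp_rw [hexp]
      rw [integral_add hI1 hI2,
          integral_sub (hh.integrable_sq.const_mul _) (hint_uh.const_mul _),
          integral_const_mul, integral_const_mul, integral_const_mul]
    rw [hcalc] at key
    nlinarith

/-- **Explicit solution of the variational problem for `κ₁`** (Section 5).
With `q = ∫_{(c,∞)} w dν` and `V = ∫_{(c,∞)} w² dν − q² ∈ (0,∞)`, for every `δ > 0`,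
`inf{(1/2)∫h²dν : ∫h dν = 0, (q/f₀)|∫_{(c,∞)} w h dν| ≥ δ} = (δ²/2) f₀²/(q² V)`. -/
theorem variational_problem_kappa_one
    (ν : Measure ℝ) [IsProbabilityMeasure ν]
    (w : ℝ → ℝ) (hwmeas : Measurable w) (hwnonneg : ∀ x, 0 ≤ w x)
    (c f₀ : ℝ) (hf₀ : 0 < f₀)
    (hw1 : IntegrableOn w (Set.Ioi c) ν)
    (hw2 : IntegrableOn (fun x => (w x) ^ 2) (Set.Ioi c) ν)
    (q : ℝ) (hq : q = ∫ x in Set.Ioi c, w x ∂ν)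
    (V : ℝ) (hV : V = (∫ x in Set.Ioi c, (w x) ^ 2 ∂ν) - q ^ 2) (hVpos : 0 < V)
    (δ : ℝ) (hδ : 0 < δ) :
    sInf {r : ℝ | ∃ h : ℝ → ℝ, MemLp h 2 ν ∧ (∫ x, h x ∂ν) = 0 ∧
        δ ≤ (q / f₀) * |∫ x in Set.Ioi c, w x * h x ∂ν| ∧
        r = 2⁻¹ * ∫ x, (h x) ^ 2 ∂ν} =
      δ ^ 2 / 2 * (f₀ ^ 2 / (q ^ 2 * V)) := by
  have hqnonneg : 0 ≤ q := by
    rw [hq]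
    exact integral_nonneg fun x => hwnonneg x
  rcases eq_or_lt_of_le hqnonneg with hq0 | hqpos
  · -- q = 0 : feasible set is empty and RHS is 0
    have hempty : {r : ℝ | ∃ h : ℝ → ℝ, MemLp h 2 ν ∧ (∫ x, h x ∂ν) = 0 ∧
        δ ≤ (q / f₀) * |∫ x in Set.Ioi c, w x * h x ∂ν| ∧
        r = 2⁻¹ * ∫ x, (h x) ^ 2 ∂ν} = ∅ := by
      ext r
      simp only [Set.mem_setOf_eq, Set.mem_empty_iff_false, iff_false]
      rintro ⟨h, -, -, hcon, -⟩
      rw [← hq0] at hcon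
      simp at hcon
      linarith
    rw [hempty, Real.sInf_empty, ← hq0]
    simp
  -- main case: q > 0
  set g : ℝ → ℝ := (Set.Ioi c).indicator w with hgdef
  have hgmeas : Measurable g := hwmeas.indicator measurableSet_Ioi
  have hg_int : Integrable g ν :=
    (integrable_indicator_iff measurableSet_Ioi).2 hw1
  have hgsq : ∀ x, (g x) ^ 2 = (Set.Ioi c).indicator (fun x => (w x) ^ 2) x := by
    intro x
    by_cases hx : x ∈ Set.Ioi c <;> simp [hgdef, Set.indicator_of_mem, Set.indicator_of_notMem, hx]
  have hg_sq_int : Integrable (fun x => (g x) ^ 2) ν := by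
    simp_rw [hgsq]
    exact (integrable_indicator_iff measurableSet_Ioi).2 hw2
  have hgL2 : MemLp g 2 ν :=
    (memLp_two_iff_integrable_sq hgmeas.aestronglyMeasurable).2 hg_sq_int
  have hgint : ∫ x, g x ∂ν = q := by
    rw [hq, hgdef, integral_indicator measurableSet_Ioi]
  have hgsqint : ∫ x, (g x) ^ 2 ∂ν = V + q ^ 2 := by
    rw [hV]
    simp_rw [hgsq]
    rw [integral_indicator measurableSet_Ioi]
    ring
  set u : ℝ → ℝ := fun x => g x - q with hudef
  have huL2 : MemLp u 2 ν := hgL2.sub (memLp_const q)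
  have hu_int : Integrable u ν := hg_int.sub (integrable_const q)
  have huint : ∫ x, u x ∂ν = 0 := by
    rw [hudef]
    rw [integral_sub hg_int (integrable_const q), hgint, integral_const]
    simp
  have husq : ∫ x, (u x) ^ 2 ∂ν = V := by
    have hexp : ∀ x, (u x) ^ 2 = (g x) ^ 2 - (2 * q) * g x + q ^ 2 := by
      intro x; simp only [hudef]; ring
    have hI1 : Integrable (fun x => (g x) ^ 2 - (2 * q) * g x) ν :=
      hg_sq_int.sub (hg_int.const_mul _)
    simp_rw [hexp]
    rw [integral_add hI1 (integrable_const _),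
        integral_sub hg_sq_int (hg_int.const_mul _), integral_const_mul, hgint, hgsqint,
        integral_const]
    simp
    ring
  -- key reformulation of the linear constraint
  have hlin : ∀ h : ℝ → ℝ, MemLp h 2 ν → (∫ x, h x ∂ν) = 0 →
      (∫ x in Set.Ioi c, w x * h x ∂ν) = ∫ x, u x * h x ∂ν := by
    intro h hh hh0
    have h1 : (∫ x in Set.Ioi c, w x * h x ∂ν) = ∫ x, g x * h x ∂ν := by
      rw [← integral_indicator measurableSet_Ioi]
      congr 1
      ext x
      by_cases hx : x ∈ Set.Ioi c <;>
        simp [hgdef, Set.indicator_of_mem, Set.indicator_of_notMem, hx]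
    have hh_int : Integrable h ν :=
      (memLp_one_iff_integrable).1 (hh.mono_exponent (by norm_num))
    have h2 : ∫ x, u x * h x ∂ν = (∫ x, g x * h x ∂ν) - q * ∫ x, h x ∂ν := by
      have heq : ∀ x, u x * h x = g x * h x - q * h x := by intro x; simp only [hudef]; ring
      simp_rw [heq]
      rw [integral_sub (l2_mul_integrable hgL2 hh) (hh_int.const_mul q), integral_const_mul]
    rw [h1, h2, hh0]
    ring
  set R : ℝ := δ ^ 2 / 2 * (f₀ ^ 2 / (q ^ 2 * V)) with hR
  set S := {r : ℝ | ∃ h : ℝ → ℝ, MemLp h 2 ν ∧ (∫ x, h x ∂ν) = 0 ∧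
        δ ≤ (q / f₀) * |∫ x in Set.Ioi c, w x * h x ∂ν| ∧
        r = 2⁻¹ * ∫ x, (h x) ^ 2 ∂ν} with hS
  -- the optimizer
  set t : ℝ := δ * f₀ / (q * V) with ht
  have htpos : 0 < t := by positivity
  have hstarint : ∫ x, t * u x ∂ν = 0 := by
    rw [integral_const_mul, huint, mul_zero]
  have hmem : R ∈ S := by
    refine ⟨fun x => t * u x, huL2.const_mul t, hstarint, ?_, ?_⟩
    · have hkey : (∫ x in Set.Ioi c, w x * (t * u x) ∂ν) = t * V := by
        rw [hlin (fun x => t * u x) (huL2.const_mul t) hstarint]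
        have heq : ∀ x, u x * (t * u x) = t * (u x) ^ 2 := by intro x; ring
        simp_rw [heq]
        rw [integral_const_mul, husq]
      rw [hkey, abs_of_pos (by positivity)]
      have : (q / f₀) * (t * V) = δ := by
        rw [ht]; field_simp
      rw [this]
    · have heq : ∀ x, (t * u x) ^ 2 = t ^ 2 * (u x) ^ 2 := by intro x; ring
      simp_rw [heq]
      rw [integral_const_mul, husq, hR, ht]
      field_simp
  -- lower bound
  have hlb : ∀ r ∈ S, R ≤ r := by
    rintro r ⟨h, hh, hh0, hcon, hval⟩
    rw [hlin h hh hh0] at hcon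
    set B := ∫ x, u x * h x ∂ν with hB
    have hcs : B ^ 2 ≤ V * ∫ x, (h x) ^ 2 ∂ν := by
      have := l2_cauchy_schwarz huL2 hh
      rwa [husq] at this
    have hBbig : δ * f₀ ≤ q * |B| := by
      calc δ * f₀ ≤ (q / f₀ * |B|) * f₀ := by nlinarith
        _ = q * |B| := by field_simp
    have hB2 : (δ * f₀) ^ 2 ≤ q ^ 2 * B ^ 2 := by
      have h1 : (δ * f₀) ^ 2 ≤ (q * |B|) ^ 2 :=
        pow_le_pow_left₀ (by positivity) hBbig 2
      calc (δ * f₀) ^ 2 ≤ (q * |B|) ^ 2 := h1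
        _ = q ^ 2 * B ^ 2 := by rw [mul_pow, sq_abs]
    have hfin : δ ^ 2 * f₀ ^ 2 ≤ (∫ x, (h x) ^ 2 ∂ν) * (q ^ 2 * V) := by
      nlinarith [mul_le_mul_of_nonneg_left hcs (sq_nonneg q)]
    have h2 : δ ^ 2 * f₀ ^ 2 / (q ^ 2 * V) ≤ ∫ x, (h x) ^ 2 ∂ν :=
      (div_le_iff₀ (by positivity)).2 hfin
    rw [hval, hR]
    calc δ ^ 2 / 2 * (f₀ ^ 2 / (q ^ 2 * V)) = 2⁻¹ * (δ ^ 2 * f₀ ^ 2 / (q ^ 2 * V)) := by ring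
      _ ≤ 2⁻¹ * ∫ x, (h x) ^ 2 ∂ν := by linarith
  exact le_antisymm (csInf_le ⟨R, hlb⟩ hmem) (le_csInf ⟨R, hmem⟩ hlb)
end
end

section
/- Let μ and ν be probability measures on ℝ with μ ≪ ν and w = dμ/dν, let c ∈ ℝ, set q = μ((c,∞)), and suppose D := ∫_{(c,∞)} (x − c)² w(x)² ν(dx) − (∫_{(c,∞)} (x − c) μ(dx))² satisfies 0 < D < ∞. Then for every δ > 0, inf{ (1/2)∫h² dν : h ∈ L₂(ℝ,ν), ∫h dν = 0, |∫_{(c,∞)} (x − c) w(x) h(x) ν(dx)| ≥ δ } = δ²/(2D). Equivalently (by Fubini's theorem, since ∫_c^∞ ∫ 1{y > x} w(y)h(y) ν(dy) dx = ∫_{(c,∞)} (y − c) w(y)h(y) ν(dy)), the quantity κ₂(q,δ) = inf{ I_ν(η) : η ∈ M_b^{ν,0}, |∫_c^∞ η(1{· > x}w) dx| ≥ δ } equals δ²/2 times the inverse of c²E_ν[w²1{X>c}] − 2c E_ν[Xw²1{X>c}] + E_ν[X²w²1{X>c}] − (E_μ[X1{X>c}] − qc)². -/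
open MeasureTheory ProbabilityTheory Filter Set
open scoped Topology UniformConvergence ENNReal NNReal

noncomputable section

-- helper lemmas
lemma mulInt {ν : Measure ℝ} {g h : ℝ → ℝ} (hg : MemLp g 2 ν) (hh : MemLp h 2 ν) :
    Integrable (fun x => g x * h x) ν := by
  have h1 : (1 : ℝ≥0∞) / 1 = 1 / 2 + 1 / 2 := by
    rw [ENNReal.div_add_div_same, one_add_one_eq_two,
      ENNReal.div_self two_ne_zero ENNReal.ofNat_ne_top, div_one]
  haveI : ENNReal.HolderTriple 2 2 1 := ⟨by simpa [one_div] using h1.symm⟩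
  have h2 := hh.smul (r := 1) hg
  rw [memLp_one_iff_integrable] at h2
  exact h2

lemma cs {ν : Measure ℝ} {g h : ℝ → ℝ} (hg : MemLp g 2 ν) (hh : MemLp h 2 ν)
    (hA : 0 < ∫ x, g x ^ 2 ∂ν) :
    (∫ x, g x * h x ∂ν) ^ 2 ≤ (∫ x, g x ^ 2 ∂ν) * ∫ x, h x ^ 2 ∂ν := by
  set A := ∫ x, g x ^ 2 ∂ν with hA'
  set B := ∫ x, g x * h x ∂ν with hB'
  set C := ∫ x, h x ^ 2 ∂ν with hC'
  have hg2 := hg.integrable_sq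
  have hh2 := hh.integrable_sq
  have hgh := mulInt hg hh
  have key : (0:ℝ) ≤ A * (A * C - B ^ 2) := by
    have h0 : (0:ℝ) ≤ ∫ x, (A * h x - B * g x) ^ 2 ∂ν :=
      integral_nonneg fun x => sq_nonneg _
    have hexp : ∀ x, (A * h x - B * g x) ^ 2
        = (A ^ 2 * h x ^ 2 - (2 * A * B) * (g x * h x)) + B ^ 2 * g x ^ 2 := fun x => by ring
    have hi1 : Integrable (fun x => A ^ 2 * h x ^ 2 - (2 * A * B) * (g x * h x)) ν :=
      (hh2.const_mul _).sub (hgh.const_mul _)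
    have hval : ∫ x, (A * h x - B * g x) ^ 2 ∂ν = A ^ 2 * C - 2 * A * B * B + B ^ 2 * A := by
      rw [integral_congr_ae (Eventually.of_forall hexp),
        integral_add hi1 (hg2.const_mul _),
        integral_sub (hh2.const_mul _) (hgh.const_mul _),
        integral_const_mul, integral_const_mul, integral_const_mul]
    rw [hval] at h0
    nlinarith [h0]
  nlinarith [key, hA]

lemma fubini_aux (ν : Measure ℝ) [IsFiniteMeasure ν] (c : ℝ) (F : ℝ → ℝ)
    (hFm : Measurable F) (hF : IntegrableOn F (Set.Ioi c) ν)
    (hF2 : IntegrableOn (fun y => (y - c) * F y) (Set.Ioi c) ν) :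
    (∫ x in Set.Ioi c, (∫ y in Set.Ioi x, F y ∂ν)) = ∫ y in Set.Ioi c, (y - c) * F y ∂ν := by
  set μ1 : Measure ℝ := volume.restrict (Set.Ioi c) with hμ1
  set μ2 : Measure ℝ := ν.restrict (Set.Ioi c) with hμ2
  set f : ℝ × ℝ → ℝ := fun p => Set.indicator {p : ℝ × ℝ | p.1 < p.2} (fun p => F p.2) p with hf
  have hsm : MeasurableSet {p : ℝ × ℝ | p.1 < p.2} := measurableSet_lt measurable_fst measurable_snd
  have hmeas : Measurable f := (hFm.comp measurable_snd).indicator hsm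
  have habs : IntegrableOn (fun y => |(y - c) * F y|) (Set.Ioi c) ν := hF2.abs
  have hint : Integrable f (μ1.prod μ2) := by
    refine ⟨hmeas.aestronglyMeasurable, ?_⟩
    rw [HasFiniteIntegral, lintegral_prod_symm' _ (by fun_prop)]
    have h1 : ∀ᵐ y ∂μ2, (∫⁻ x, ‖f (x, y)‖ₑ ∂μ1) = ENNReal.ofReal ((y - c) * |F y|) := by
      rw [hμ2]
      filter_upwards [ae_restrict_mem measurableSet_Ioi] with y hy
      have : ∀ x, ‖f (x, y)‖ₑ
          = Set.indicator (Set.Iio y) (fun _ => ‖F y‖ₑ) x := by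
        intro x
        by_cases hxy : x < y <;> simp [hf, Set.indicator_apply, hxy]
      simp_rw [this]
      rw [lintegral_indicator measurableSet_Iio _, setLIntegral_const,
        Measure.restrict_apply measurableSet_Iio, Set.Iio_inter_Ioi,
        Real.volume_Ioo, Real.enorm_eq_ofReal_abs,
        ← ENNReal.ofReal_mul (abs_nonneg _)]
      rw [mul_comm]
    rw [lintegral_congr_ae h1]
    have h2 : ∀ᵐ y ∂μ2, ENNReal.ofReal ((y - c) * |F y|) = ENNReal.ofReal (|(y - c) * F y|) := by
      rw [hμ2]
      filter_upwards [ae_restrict_mem measurableSet_Ioi] with y hy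
      rw [abs_mul, abs_of_nonneg (le_of_lt (sub_pos.2 hy))]
    rw [lintegral_congr_ae h2]
    exact habs.lintegral_lt_top
  have left : (∫ x in Set.Ioi c, (∫ y in Set.Ioi x, F y ∂ν)) = ∫ x, (∫ y, f (x, y) ∂μ2) ∂μ1 := by
    refine (setIntegral_congr_ae measurableSet_Ioi ?_).symm
    filter_upwards [] with x hx
    have : ∀ y, f (x, y) = Set.indicator (Set.Ioi x) F y := by
      intro y
      by_cases hxy : x < y <;> simp [hf, Set.indicator_apply, hxy]
    simp_rw [this]
    rw [integral_indicator measurableSet_Ioi, hμ2,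
      Measure.restrict_restrict measurableSet_Ioi,
      Set.Ioi_inter_Ioi, max_eq_left (le_of_lt hx)]
  have right : (∫ y, (∫ x, f (x, y) ∂μ1) ∂μ2) = ∫ y in Set.Ioi c, (y - c) * F y ∂ν := by
    refine setIntegral_congr_ae measurableSet_Ioi ?_
    filter_upwards [] with y hy
    have : ∀ x, f (x, y) = Set.indicator (Set.Iio y) (fun _ => F y) x := by
      intro x
      by_cases hxy : x < y <;> simp [hf, Set.indicator_apply, hxy]
    simp_rw [this]
    rw [integral_indicator_const _ measurableSet_Iio, hμ1, measureReal_def,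
      Measure.restrict_apply measurableSet_Iio, Set.Iio_inter_Ioi,
      Real.volume_Ioo, ENNReal.toReal_ofReal (le_of_lt (sub_pos.2 hy)), smul_eq_mul]
  rw [left, ← integral_prod f hint, integral_prod_symm f hint, right]

lemma toNNReal_norm_le (t : ℝ) : ‖(Real.toNNReal t : ℝ)‖ ≤ ‖t‖ := by
  rw [Real.norm_eq_abs, Real.norm_eq_abs, Real.coe_toNNReal']
  rcases le_total t 0 with h | h
  · rw [max_eq_right h, abs_zero]; exact abs_nonneg t
  · rw [max_eq_left h]

lemma jd_withDensityᵥ {ν : Measure ℝ} [SigmaFinite ν] {h : ℝ → ℝ} (hm : Measurable h)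
    (hi : Integrable h ν) :
    SignedMeasure.toJordanDecomposition (ν.withDensityᵥ h) =
      @MeasureTheory.JordanDecomposition.mk ℝ _
        (ν.withDensity fun x => ENNReal.ofReal (h x))
        (ν.withDensity fun x => ENNReal.ofReal (- h x))
        (MeasureTheory.isFiniteMeasure_withDensity_ofReal hi.2)
        (MeasureTheory.isFiniteMeasure_withDensity_ofReal hi.neg.2)
        (MeasureTheory.withDensity_ofReal_mutuallySingular hm) := by
  have h0 : (0 : SignedMeasure ℝ) ⟂ᵥ ν.toENNRealVectorMeasure :=
    VectorMeasure.MutuallySingular.zero_left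
  have hadd : ν.withDensityᵥ h = 0 + ν.withDensityᵥ h := by rw [zero_add]
  have hjd := MeasureTheory.SignedMeasure.toJordanDecomposition_eq_of_eq_add_withDensity
    hm hi h0 hadd
  rw [hjd]
  congr 1 <;> rw [SignedMeasure.toJordanDecomposition_zero] <;> simp

lemma smInt_withDensityᵥ {ν : Measure ℝ} [SigmaFinite ν] {h f : ℝ → ℝ} (hm : Measurable h)
    (hi : Integrable h ν) (hfm : AEStronglyMeasurable f ν)
    (hint : Integrable (fun x => f x * h x) ν) :
    smInt (ν.withDensityᵥ h) f = ∫ x, f x * h x ∂ν := by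
  rw [smInt, jd_withDensityᵥ hm hi]
  show (∫ x, f x ∂(ν.withDensity fun x => ENNReal.ofReal (h x))) -
      (∫ x, f x ∂(ν.withDensity fun x => ENNReal.ofReal (- h x))) = _
  rw [show (fun x => ENNReal.ofReal (h x)) = fun x => ((Real.toNNReal (h x) : ℝ≥0) : ℝ≥0∞)
      from rfl,
    show (fun x => ENNReal.ofReal (- h x)) = fun x => ((Real.toNNReal (- h x) : ℝ≥0) : ℝ≥0∞)
      from rfl,
    integral_withDensity_eq_integral_smul (by fun_prop) f,
    integral_withDensity_eq_integral_smul (by fun_prop) f]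
  have key : ∀ t u : ℝ, ‖Real.toNNReal t • u‖ ≤ ‖u * t‖ := by
    intro t u
    rw [NNReal.smul_def, smul_eq_mul, norm_mul, norm_mul, mul_comm ‖u‖]
    exact mul_le_mul_of_nonneg_right (toNNReal_norm_le t) (norm_nonneg _)
  have i1 : Integrable (fun x => Real.toNNReal (h x) • f x) ν := by
    refine hint.mono ?_ (Eventually.of_forall fun x => key _ _)
    refine ((hm.real_toNNReal.coe_nnreal_real.aestronglyMeasurable).mul hfm).congr
      (Eventually.of_forall fun x => ?_)
    simp [NNReal.smul_def]
  have i2 : Integrable (fun x => Real.toNNReal (- h x) • f x) ν := by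
    refine hint.mono ?_ (Eventually.of_forall fun x => ?_)
    · refine ((hm.neg.real_toNNReal.coe_nnreal_real.aestronglyMeasurable).mul hfm).congr
        (Eventually.of_forall fun x => ?_)
      simp [NNReal.smul_def]
    · calc ‖Real.toNNReal (- h x) • f x‖ ≤ ‖f x * - h x‖ := key _ _
      _ = ‖f x * h x‖ := by rw [norm_mul, norm_mul, norm_neg]
  rw [← integral_sub i1 i2]
  refine integral_congr_ae (Eventually.of_forall fun x => ?_)
  simp only [NNReal.smul_def, smul_eq_mul, Real.coe_toNNReal']
  rcases le_total (h x) 0 with ht | ht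
  · rw [max_eq_right ht, max_eq_left (neg_nonneg.2 ht)]; ring
  · rw [max_eq_left ht, max_eq_right (neg_nonpos.2 ht)]; ring

lemma setint_withDensity {ν : Measure ℝ} {w : ℝ → ℝ} (hw : Measurable w)
    (hwnn : ∀ x, 0 ≤ w x) (f : ℝ → ℝ) {s : Set ℝ} (hs : MeasurableSet s) :
    ∫ x in s, f x ∂(ν.withDensity fun x => ENNReal.ofReal (w x)) = ∫ x in s, w x * f x ∂ν := by
  rw [restrict_withDensity hs,
    show (fun x => ENNReal.ofReal (w x)) = fun x => ((Real.toNNReal (w x) : ℝ≥0) : ℝ≥0∞)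
      from rfl,
    integral_withDensity_eq_integral_smul hw.real_toNNReal f]
  refine integral_congr_ae (Eventually.of_forall fun x => ?_)
  simp [NNReal.smul_def, Real.coe_toNNReal', max_eq_left (hwnn x)]

lemma half_ofReal (a : ℝ) : (2⁻¹ : ℝ≥0∞) * ENNReal.ofReal a = ENNReal.ofReal (2⁻¹ * a) := by
  rw [ENNReal.ofReal_mul (by norm_num)]
  congr 1
  rw [ENNReal.ofReal_inv_of_pos two_pos]
  norm_num

/-- **Explicit solution of the variational problem for `κ₂`** (Section 5). With
`q = μ((c,∞))` and `D = ∫_{(c,∞)}(x−c)²w(x)² ν(dx) − (∫_{(c,∞)}(x−c) μ(dx))² ∈ (0,∞)`,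
for every `δ > 0` the value of
`inf{(1/2)∫h²dν : ∫h dν = 0, |∫_{(c,∞)}(x−c)w(x)h(x) ν(dx)| ≥ δ}` is `δ²/(2D)`;
equivalently, by Fubini's theorem,
`κ₂(q,δ) = inf{I_ν(η) : η ∈ M_b^{ν,0}, |∫_c^∞ η(1{·>x}w)dx| ≥ δ}` equals `δ²/2` times the
inverse of `c²E_ν[w²1] − 2cE_ν[Xw²1] + E_ν[X²w²1] − (E_μ[X1] − qc)²`. -/
theorem variational_problem_kappa_two
    (ν : Measure ℝ) [IsProbabilityMeasure ν]
    (w : ℝ → ℝ) (hwmeas : Measurable w) (hwnonneg : ∀ x, 0 ≤ w x)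
    (μ : Measure ℝ) [IsProbabilityMeasure μ]
    (hμν : μ = ν.withDensity (fun x => ENNReal.ofReal (w x)))
    (c : ℝ)
    (hw2 : IntegrableOn (fun x => (w x) ^ 2) (Set.Ioi c) ν)
    (hxw2 : IntegrableOn (fun x => x * (w x) ^ 2) (Set.Ioi c) ν)
    (hx2w2 : IntegrableOn (fun x => x ^ 2 * (w x) ^ 2) (Set.Ioi c) ν)
    (hxμ : IntegrableOn (fun x => x) (Set.Ioi c) μ)
    (q : ℝ) (hq : q = (μ (Set.Ioi c)).toReal)
    (D : ℝ)
    (hD : D = (∫ x in Set.Ioi c, (x - c) ^ 2 * (w x) ^ 2 ∂ν) -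
      (∫ x in Set.Ioi c, (x - c) ∂μ) ^ 2)
    (hDpos : 0 < D)
    (δ : ℝ) (hδ : 0 < δ) :
    -- the value of the variational problem in density form
    sInf {r : ℝ | ∃ h : ℝ → ℝ, MemLp h 2 ν ∧ (∫ x, h x ∂ν) = 0 ∧
        δ ≤ |∫ x in Set.Ioi c, (x - c) * w x * h x ∂ν| ∧
        r = 2⁻¹ * ∫ x, (h x) ^ 2 ∂ν} =
      δ ^ 2 / (2 * D) ∧
    -- the Fubini identity behind the equivalent formulation
    (∀ h : ℝ → ℝ, MemLp h 2 ν →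
      (∫ x in Set.Ioi c, (∫ y in Set.Ioi x, w y * h y ∂ν)) =
        ∫ y in Set.Ioi c, (y - c) * w y * h y ∂ν) ∧
    -- the equivalent formulation of `κ₂` over signed measures
    (⨅ (η : SignedMeasure ℝ)
        (_ : MemMb0 ν η ∧
          δ ≤ |∫ x in Set.Ioi c, smInt η (Set.indicator (Set.Ioi x) w)|),
      rateFn ν η) =
      ENNReal.ofReal (δ ^ 2 / 2 *
        (c ^ 2 * (∫ x in Set.Ioi c, (w x) ^ 2 ∂ν) -
          2 * c * (∫ x in Set.Ioi c, x * (w x) ^ 2 ∂ν) +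
          (∫ x in Set.Ioi c, x ^ 2 * (w x) ^ 2 ∂ν) -
          ((∫ x in Set.Ioi c, x ∂μ) - q * c) ^ 2)⁻¹) := by
  -- ===== common setup =====
  set G : ℝ → ℝ := Set.indicator (Set.Ioi c) (fun y => (y - c) * w y) with hGdef
  have hGm : Measurable G :=
    ((measurable_id.sub measurable_const).mul hwmeas).indicator measurableSet_Ioi
  have hsq_int : IntegrableOn (fun y => ((y - c) * w y) ^ 2) (Set.Ioi c) ν := by
    have e : ∀ y, ((y - c) * w y) ^ 2
        = (y ^ 2 * w y ^ 2 - (2 * c) * (y * w y ^ 2)) + c ^ 2 * w y ^ 2 := fun y => by ring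
    exact ((hx2w2.sub (hxw2.const_mul (2 * c))).add (hw2.const_mul (c ^ 2))).congr
      (Eventually.of_forall fun y => (e y).symm)
  have hGsq_eq : (fun x => G x ^ 2) = Set.indicator (Set.Ioi c) (fun y => ((y - c) * w y) ^ 2) := by
    funext x; by_cases hx : x ∈ Set.Ioi c <;> simp [hGdef, Set.indicator_apply, hx]
  have hG2 : MemLp G 2 ν := by
    rw [memLp_two_iff_integrable_sq hGm.aestronglyMeasurable, hGsq_eq,
      integrable_indicator_iff measurableSet_Ioi]
    exact hsq_int
  have hGsq : ∫ x, G x ^ 2 ∂ν = ∫ x in Set.Ioi c, (x - c) ^ 2 * w x ^ 2 ∂ν := by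
    rw [hGsq_eq, integral_indicator measurableSet_Ioi]
    exact setIntegral_congr_fun measurableSet_Ioi fun y _ => by ring
  have hμset : ∀ f : ℝ → ℝ, ∫ x in Set.Ioi c, f x ∂μ = ∫ x in Set.Ioi c, w x * f x ∂ν :=
    fun f => by rw [hμν]; exact setint_withDensity hwmeas hwnonneg f measurableSet_Ioi
  set m : ℝ := ∫ x in Set.Ioi c, (x - c) ∂μ with hm
  have hGint : Integrable G ν := hG2.integrable one_le_two
  have hGI : ∫ x, G x ∂ν = m := by
    rw [hGdef, integral_indicator measurableSet_Ioi, hm, hμset]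
    exact setIntegral_congr_fun measurableSet_Ioi fun y _ => by ring
  set g : ℝ → ℝ := fun x => G x - m with hgdef
  have hg2 : MemLp g 2 ν := hG2.sub (memLp_const m)
  have hgm : Measurable g := hGm.sub measurable_const
  have hgint : Integrable g ν := hg2.integrable one_le_two
  have hgI : ∫ x, g x ∂ν = 0 := by
    rw [hgdef]
    rw [integral_sub hGint (integrable_const m), hGI, integral_const]
    simp
  have hDval : ∫ x in Set.Ioi c, (x - c) ^ 2 * w x ^ 2 ∂ν = D + m ^ 2 := by
    rw [hD]; ring
  have hgsq : ∫ x, g x ^ 2 ∂ν = D := by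
    have hexp : ∀ x, g x ^ 2 = (G x ^ 2 - (2 * m) * G x) + m ^ 2 := fun x => by
      simp only [hgdef]; ring
    have hi1 : Integrable (fun x => G x ^ 2 - (2 * m) * G x) ν :=
      (hG2.integrable_sq).sub (hGint.const_mul _)
    rw [integral_congr_ae (Eventually.of_forall hexp),
      integral_add hi1 (integrable_const _),
      integral_sub hG2.integrable_sq (hGint.const_mul _),
      integral_const_mul, hGI, hGsq, hDval, integral_const]
    simp only [measure_univ, probReal_univ, ENNReal.toReal_one, smul_eq_mul, one_mul, mul_one]
    ring
  have hbridge : ∀ h : ℝ → ℝ, MemLp h 2 ν → (∫ x, h x ∂ν) = 0 →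
      ∫ x in Set.Ioi c, (x - c) * w x * h x ∂ν = ∫ x, g x * h x ∂ν := by
    intro h hh h0
    have hGh : Integrable (fun x => G x * h x) ν := mulInt hG2 hh
    have hl : ∫ x, g x * h x ∂ν = ∫ x, G x * h x ∂ν - m * ∫ x, h x ∂ν := by
      rw [← integral_const_mul, ← integral_sub hGh ((hh.integrable one_le_two).const_mul m)]
      refine integral_congr_ae (Eventually.of_forall fun x => ?_)
      simp only [hgdef]; ring
    rw [hl, h0, mul_zero, sub_zero]
    have e : (fun x => G x * h x) = Set.indicator (Set.Ioi c) (fun y => (y - c) * w y * h y) := by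
      funext x; by_cases hx : x ∈ Set.Ioi c <;> simp [hGdef, Set.indicator_apply, hx]
    rw [e, integral_indicator measurableSet_Ioi]
  have hLB : ∀ h : ℝ → ℝ, MemLp h 2 ν → (∫ x, h x ∂ν) = 0 →
      δ ≤ |∫ x in Set.Ioi c, (x - c) * w x * h x ∂ν| →
      δ ^ 2 / (2 * D) ≤ 2⁻¹ * ∫ x, h x ^ 2 ∂ν := by
    intro h hh h0 hcon
    rw [hbridge h hh h0] at hcon
    have hcs := cs hg2 hh (by rw [hgsq]; exact hDpos)
    rw [hgsq] at hcs
    have hδ2 : δ ^ 2 ≤ (∫ x, g x * h x ∂ν) ^ 2 := by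
      have h1 := abs_nonneg (∫ x, g x * h x ∂ν)
      nlinarith [sq_abs (∫ x, g x * h x ∂ν)]
    have hfin : δ ^ 2 ≤ D * ∫ x, h x ^ 2 ∂ν := le_trans hδ2 hcs
    rw [div_le_iff₀ (by positivity)]
    nlinarith [hfin]
  set h₀ : ℝ → ℝ := fun x => (δ / D) * g x with hh₀def
  have hh₀2 : MemLp h₀ 2 ν := hg2.const_mul _
  have hh₀m : Measurable h₀ := hgm.const_mul _
  have hh₀int : Integrable h₀ ν := hh₀2.integrable one_le_two
  have hh₀I : ∫ x, h₀ x ∂ν = 0 := by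
    simp only [hh₀def]
    rw [integral_const_mul, hgI, mul_zero]
  have hh₀sq : ∫ x, h₀ x ^ 2 ∂ν = δ ^ 2 / D := by
    have e : ∀ x, h₀ x ^ 2 = (δ / D) ^ 2 * g x ^ 2 := fun x => by simp only [hh₀def]; ring
    rw [integral_congr_ae (Eventually.of_forall e), integral_const_mul, hgsq]
    rw [div_pow, div_mul_eq_mul_div, div_eq_div_iff (by positivity) (ne_of_gt hDpos)]
    ring
  have hh₀con : ∫ x in Set.Ioi c, (x - c) * w x * h₀ x ∂ν = δ := by
    rw [hbridge h₀ hh₀2 hh₀I]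
    have e : ∀ x, g x * h₀ x = (δ / D) * g x ^ 2 := fun x => by simp only [hh₀def]; ring
    rw [integral_congr_ae (Eventually.of_forall e), integral_const_mul, hgsq]
    field_simp
  -- ===== part 1 =====
  have part1 : sInf {r : ℝ | ∃ h : ℝ → ℝ, MemLp h 2 ν ∧ (∫ x, h x ∂ν) = 0 ∧
        δ ≤ |∫ x in Set.Ioi c, (x - c) * w x * h x ∂ν| ∧
        r = 2⁻¹ * ∫ x, (h x) ^ 2 ∂ν} = δ ^ 2 / (2 * D) := by
    refine IsLeast.csInf_eq ⟨⟨h₀, hh₀2, hh₀I, ?_, ?_⟩, ?_⟩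
    · rw [hh₀con, abs_of_pos hδ]
    · rw [hh₀sq]; field_simp
    · rintro r ⟨h, hh, h0, hcon, rfl⟩
      exact hLB h hh h0 hcon
  -- ===== part 2 =====
  have hwL2 : MemLp w 2 (ν.restrict (Set.Ioi c)) := by
    rw [memLp_two_iff_integrable_sq hwmeas.aestronglyMeasurable]
    exact hw2
  have hKL2 : MemLp (fun y => (y - c) * w y) 2 (ν.restrict (Set.Ioi c)) := by
    refine (memLp_two_iff_integrable_sq ?_).2 hsq_int
    exact Measurable.aestronglyMeasurable (by fun_prop)
  have part2m : ∀ h : ℝ → ℝ, Measurable h → MemLp h 2 ν →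
      (∫ x in Set.Ioi c, (∫ y in Set.Ioi x, w y * h y ∂ν)) =
        ∫ y in Set.Ioi c, (y - c) * w y * h y ∂ν := by
    intro h hm hh
    have hF : IntegrableOn (fun y => w y * h y) (Set.Ioi c) ν := mulInt hwL2 (hh.restrict _)
    have hF2 : IntegrableOn (fun y => (y - c) * (w y * h y)) (Set.Ioi c) ν := by
      refine (mulInt hKL2 (hh.restrict _)).congr (Eventually.of_forall fun y => by ring)
    have hfb := fubini_aux ν c (fun y => w y * h y) (hwmeas.mul hm) hF hF2
    rw [hfb]
    exact setIntegral_congr_fun measurableSet_Ioi fun y _ => by ring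
  have part2 : ∀ h : ℝ → ℝ, MemLp h 2 ν →
      (∫ x in Set.Ioi c, (∫ y in Set.Ioi x, w y * h y ∂ν)) =
        ∫ y in Set.Ioi c, (y - c) * w y * h y ∂ν := by
    intro h hh
    have h'm : Measurable (hh.1.mk h) := hh.1.measurable_mk
    have hae : h =ᵐ[ν] hh.1.mk h := hh.1.ae_eq_mk
    have hh' : MemLp (hh.1.mk h) 2 ν := hh.ae_eq hae
    have key := part2m _ h'm hh'
    have el : (∫ x in Set.Ioi c, (∫ y in Set.Ioi x, w y * h y ∂ν)) =
        ∫ x in Set.Ioi c, (∫ y in Set.Ioi x, w y * hh.1.mk h y ∂ν) := by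
      refine setIntegral_congr_fun measurableSet_Ioi fun x _ => ?_
      refine integral_congr_ae (ae_restrict_of_ae ?_)
      filter_upwards [hae] with y hy
      rw [hy]
    have er : (∫ y in Set.Ioi c, (y - c) * w y * h y ∂ν) =
        ∫ y in Set.Ioi c, (y - c) * w y * hh.1.mk h y ∂ν := by
      refine integral_congr_ae (ae_restrict_of_ae ?_)
      filter_upwards [hae] with y hy
      rw [hy]
    rw [el, er, key]
  -- ===== part 3 =====
  have hsmInt : ∀ (h : ℝ → ℝ), Measurable h → MemLp h 2 ν →
      ∫ x in Set.Ioi c, smInt (ν.withDensityᵥ h) (Set.indicator (Set.Ioi x) w) =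
        ∫ y in Set.Ioi c, (y - c) * w y * h y ∂ν := by
    intro h hm hh
    have hint : Integrable h ν := hh.integrable one_le_two
    have hwh : IntegrableOn (fun y => w y * h y) (Set.Ioi c) ν := mulInt hwL2 (hh.restrict _)
    have step : ∀ x ∈ Set.Ioi c, smInt (ν.withDensityᵥ h) (Set.indicator (Set.Ioi x) w)
        = ∫ y in Set.Ioi x, w y * h y ∂ν := by
      intro x hx
      have hsub : Set.Ioi x ⊆ Set.Ioi c := Set.Ioi_subset_Ioi (le_of_lt hx)
      have e : (fun y => Set.indicator (Set.Ioi x) w y * h y)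
          = Set.indicator (Set.Ioi x) (fun y => w y * h y) := by
        funext y; by_cases hy : y ∈ Set.Ioi x <;> simp [Set.indicator_apply, hy]
      have hint2 : Integrable (fun y => Set.indicator (Set.Ioi x) w y * h y) ν := by
        rw [e, integrable_indicator_iff measurableSet_Ioi]
        exact hwh.mono_set hsub
      rw [smInt_withDensityᵥ hm hint
        ((hwmeas.indicator measurableSet_Ioi).aestronglyMeasurable) hint2,
        e, integral_indicator measurableSet_Ioi]
    rw [setIntegral_congr_fun measurableSet_Ioi step]
    exact part2m h hm hh
  have hBIG : c ^ 2 * (∫ x in Set.Ioi c, (w x) ^ 2 ∂ν) -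
      2 * c * (∫ x in Set.Ioi c, x * (w x) ^ 2 ∂ν) +
      (∫ x in Set.Ioi c, x ^ 2 * (w x) ^ 2 ∂ν) -
      ((∫ x in Set.Ioi c, x ∂μ) - q * c) ^ 2 = D := by
    have h1 : ∫ x in Set.Ioi c, (x - c) ^ 2 * w x ^ 2 ∂ν
        = c ^ 2 * (∫ x in Set.Ioi c, (w x) ^ 2 ∂ν) -
          2 * c * (∫ x in Set.Ioi c, x * (w x) ^ 2 ∂ν) +
          (∫ x in Set.Ioi c, x ^ 2 * (w x) ^ 2 ∂ν) := by
      have e : ∀ y ∈ Set.Ioi c, (y - c) ^ 2 * w y ^ 2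
          = (y ^ 2 * w y ^ 2 - (2 * c) * (y * w y ^ 2)) + c ^ 2 * w y ^ 2 := fun y _ => by ring
      have hi1 : Integrable (fun y => y ^ 2 * w y ^ 2 - (2 * c) * (y * w y ^ 2))
          (ν.restrict (Set.Ioi c)) := hx2w2.sub (hxw2.const_mul _)
      rw [setIntegral_congr_fun measurableSet_Ioi e,
        integral_add hi1 (hw2.const_mul _),
        integral_sub hx2w2 (hxw2.const_mul _), integral_const_mul, integral_const_mul]
      ring
    have hc : IntegrableOn (fun _ : ℝ => c) (Set.Ioi c) μ :=
      integrableOn_const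
    have h2 : m = (∫ x in Set.Ioi c, x ∂μ) - q * c := by
      rw [hm, integral_sub hxμ hc, setIntegral_const, measureReal_def, hq, smul_eq_mul]
    rw [hD, ← h2]
    linarith [h1]
  have hval : δ ^ 2 / 2 * D⁻¹ = δ ^ 2 / (2 * D) := by
    rw [division_def, division_def, mul_inv]
    ring
  have part3 : (⨅ (η : SignedMeasure ℝ)
        (_ : MemMb0 ν η ∧
          δ ≤ |∫ x in Set.Ioi c, smInt η (Set.indicator (Set.Ioi x) w)|),
      rateFn ν η) = ENNReal.ofReal (δ ^ 2 / (2 * D)) := by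
    refine le_antisymm ?_ ?_
    · -- upper bound via h₀
      set η₀ : SignedMeasure ℝ := ν.withDensityᵥ h₀ with hη₀
      have hmem : MemMb0 ν η₀ := by
        constructor
        · exact Measure.withDensityᵥ_absolutelyContinuous ν h₀
        · rw [hη₀, withDensityᵥ_apply hh₀int MeasurableSet.univ, setIntegral_univ]
          exact hh₀I
      have hconstr : δ ≤ |∫ x in Set.Ioi c, smInt η₀ (Set.indicator (Set.Ioi x) w)| := by
        rw [hη₀, hsmInt h₀ hh₀m hh₀2, hh₀con, abs_of_pos hδ]
      have hrd : (SignedMeasure.rnDeriv η₀ ν) =ᵐ[ν] h₀ := by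
        refine Integrable.ae_eq_of_withDensityᵥ_eq (SignedMeasure.integrable_rnDeriv _ _)
          hh₀int ?_
        rw [SignedMeasure.withDensityᵥ_rnDeriv_eq _ _ hmem.1]
      have hrate : rateFn ν η₀ = ENNReal.ofReal (δ ^ 2 / (2 * D)) := by
        unfold rateFn
        rw [if_pos hmem]
        have hcong : ∫⁻ x, ENNReal.ofReal ((SignedMeasure.rnDeriv η₀ ν x) ^ 2) ∂ν
            = ∫⁻ x, ENNReal.ofReal (h₀ x ^ 2) ∂ν := by
          refine lintegral_congr_ae ?_
          filter_upwards [hrd] with x hx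
          rw [hx]
        rw [hcong, ← ofReal_integral_eq_lintegral_ofReal hh₀2.integrable_sq
          (Eventually.of_forall fun x => sq_nonneg _), hh₀sq, half_ofReal]
        congr 1
        field_simp
      calc (⨅ (η : SignedMeasure ℝ) (_ : MemMb0 ν η ∧
            δ ≤ |∫ x in Set.Ioi c, smInt η (Set.indicator (Set.Ioi x) w)|), rateFn ν η)
          ≤ ⨅ (_ : MemMb0 ν η₀ ∧
            δ ≤ |∫ x in Set.Ioi c, smInt η₀ (Set.indicator (Set.Ioi x) w)|), rateFn ν η₀ :=
            iInf_le _ η₀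
        _ = rateFn ν η₀ := iInf_pos ⟨hmem, hconstr⟩
        _ = _ := hrate
    · -- lower bound
      refine le_iInf fun η => le_iInf fun hcond => ?_
      obtain ⟨hmem, hconstr⟩ := hcond
      unfold rateFn
      rw [if_pos hmem]
      set h : ℝ → ℝ := SignedMeasure.rnDeriv η ν with hhdef
      have hηeq : ν.withDensityᵥ h = η := SignedMeasure.withDensityᵥ_rnDeriv_eq η ν hmem.1
      by_cases hfin : ∫⁻ x, ENNReal.ofReal (h x ^ 2) ∂ν = ⊤
      · rw [hfin, ENNReal.mul_top (by norm_num)]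
        exact le_top
      · have hm' : Measurable h := SignedMeasure.measurable_rnDeriv η ν
        have hsq : Integrable (fun x => h x ^ 2) ν := by
          refine ⟨(hm'.pow_const 2).aestronglyMeasurable, ?_⟩
          rw [HasFiniteIntegral,
            lintegral_congr (fun x => Real.enorm_eq_ofReal (sq_nonneg (h x)))]
          exact lt_of_le_of_ne le_top hfin
        have hh2 : MemLp h 2 ν := (memLp_two_iff_integrable_sq hm'.aestronglyMeasurable).2 hsq
        have hI0 : ∫ x, h x ∂ν = 0 := by
          have happ := withDensityᵥ_apply (hh2.integrable one_le_two)
            (MeasurableSet.univ (α := ℝ))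
          rw [hηeq, hmem.2] at happ
          rw [← setIntegral_univ]
          exact happ.symm
        have hconstr' : δ ≤ |∫ y in Set.Ioi c, (y - c) * w y * h y ∂ν| := by
          rw [← hsmInt h hm' hh2, hηeq]
          exact hconstr
        have hlow := hLB h hh2 hI0 hconstr'
        rw [← ofReal_integral_eq_lintegral_ofReal hsq
          (Eventually.of_forall fun x => sq_nonneg _), half_ofReal]
        exact ENNReal.ofReal_le_ofReal hlow
  refine ⟨part1, part2, ?_⟩
  rw [hBIG, hval, part3]
end
end

section
/- Assume (A1)–(A4). Write c_m = T^{-1}(q_m). Then, as m → ∞: (a) q_m²(E_ν[w(X)²1{X > c_m}] − q_m²)/f(c_m)² → 0, so that κ₁(q_m,δ) = (δ²/2)f(c_m)²/(q_m²(E_ν[w(X)²1{X > c_m}] − q_m²)) → ∞ for every δ > 0; (b) c_m²E_ν[w(X)²1{X > c_m}] − 2c_m E_ν[X w(X)²1{X > c_m}] + E_ν[X²w(X)²1{X > c_m}] − (E_μ[X1{X > c_m}] − q_m c_m)² → 0, so that κ₂(q_m,δ) → ∞ for every δ > 0; and (c) E_ν[w(X)²1{X > c_m}] − q_m² → 0,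 so that κ₃(q_m,δ) = δ²/(2(E_ν[w(X)²1{X > c_m}] − q_m²)) → ∞ for every δ > 0. -/
open MeasureTheory Filter Set
open scoped Topology ENNReal

noncomputable section

/-- The tail `T(t) = μ((t,∞))` of a measure on `ℝ`. -/
def tailT (μ : Measure ℝ) (t : ℝ) : ℝ := (μ (Set.Ioi t)).toReal

/-- The importance sampling estimator of the tail,
`T_n^w(t) = ν_n^w((t,∞)) = n⁻¹ ∑_{i<n} w(X_i) 1{X_i > t}`. -/
def tailTnw {Ω : Type*} (w : ℝ → ℝ) (X : ℕ → Ω → ℝ) (n : ℕ) (ω : Ω) (t : ℝ) : ℝ :=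
  (n : ℝ)⁻¹ * ∑ i ∈ Finset.range n, Set.indicator (Set.Ioi t) w (X i ω)

/-- The right-continuous generalized inverse `H⁻¹(p) = inf{u : H(u) ≤ p}` of a
non-increasing function. -/
def rcInv (H : ℝ → ℝ) (p : ℝ) : ℝ := sInf {u : ℝ | H u ≤ p}

theorem kappa_aux
    (ν : Measure ℝ) [IsProbabilityMeasure ν]
    (w : ℝ → ℝ) (hwmeas : Measurable w) (hwnonneg : ∀ x, 0 ≤ w x)
    (μ : Measure ℝ) [IsProbabilityMeasure μ]
    (hμν : μ = ν.withDensity (fun x => ENNReal.ofReal (w x)))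
    (qs : ℕ → ℝ)
    (hqs0 : Filter.Tendsto qs Filter.atTop (𝓝 0))
    (hqspos : ∀ m, 0 < qs m)
    (c : ℕ → ℝ) (hcmono : Monotone c)
    (hq : ∀ m, (μ (Set.Ioi (c m))).toReal = qs m)
    (f : ℝ → ℝ)
    (hA1 : Integrable (fun x : ℝ => x ^ 2) μ)
    (hA2 : (fun m => (qs m) ^ 2) =o[Filter.atTop] (fun m => f (c m)))
    (hA3 : Integrable (fun x : ℝ => x ^ 2 * (w x) ^ 2) ν)
    (hA4 : (fun m => (qs m) ^ 2 * ∫ x in Set.Ioi (c m), (w x) ^ 2 ∂ν) =o[Filter.atTop]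
      (fun m => (f (c m)) ^ 2))
    (hw2 : ∀ m, IntegrableOn (fun x => (w x) ^ 2) (Set.Ioi (c m)) ν)
    (hpos1 : ∀ m, 0 < (∫ x in Set.Ioi (c m), (w x) ^ 2 ∂ν) - (qs m) ^ 2)
    (hpos2 : ∀ m,
      0 < (c m) ^ 2 * (∫ x in Set.Ioi (c m), (w x) ^ 2 ∂ν) -
          2 * c m * (∫ x in Set.Ioi (c m), x * (w x) ^ 2 ∂ν) +
          (∫ x in Set.Ioi (c m), x ^ 2 * (w x) ^ 2 ∂ν) -
          ((∫ x in Set.Ioi (c m), x ∂μ) - qs m * c m) ^ 2) :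
    (Filter.Tendsto (fun m =>
        (qs m) ^ 2 * ((∫ x in Set.Ioi (c m), (w x) ^ 2 ∂ν) - (qs m) ^ 2) / (f (c m)) ^ 2)
      Filter.atTop (𝓝 0) ∧
      ∀ δ > (0:ℝ), Filter.Tendsto (fun m =>
          δ ^ 2 / 2 * ((f (c m)) ^ 2 /
            ((qs m) ^ 2 * ((∫ x in Set.Ioi (c m), (w x) ^ 2 ∂ν) - (qs m) ^ 2))))
        Filter.atTop Filter.atTop) ∧
    (Filter.Tendsto (fun m =>
        (c m) ^ 2 * (∫ x in Set.Ioi (c m), (w x) ^ 2 ∂ν) -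
          2 * c m * (∫ x in Set.Ioi (c m), x * (w x) ^ 2 ∂ν) +
          (∫ x in Set.Ioi (c m), x ^ 2 * (w x) ^ 2 ∂ν) -
          ((∫ x in Set.Ioi (c m), x ∂μ) - qs m * c m) ^ 2)
      Filter.atTop (𝓝 0) ∧
      ∀ δ > (0:ℝ), Filter.Tendsto (fun m =>
          δ ^ 2 / 2 *
            ((c m) ^ 2 * (∫ x in Set.Ioi (c m), (w x) ^ 2 ∂ν) -
              2 * c m * (∫ x in Set.Ioi (c m), x * (w x) ^ 2 ∂ν) +
              (∫ x in Set.Ioi (c m), x ^ 2 * (w x) ^ 2 ∂ν) -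
              ((∫ x in Set.Ioi (c m), x ∂μ) - qs m * c m) ^ 2)⁻¹)
        Filter.atTop Filter.atTop) ∧
    (Filter.Tendsto (fun m =>
        (∫ x in Set.Ioi (c m), (w x) ^ 2 ∂ν) - (qs m) ^ 2)
      Filter.atTop (𝓝 0) ∧
      ∀ δ > (0:ℝ), Filter.Tendsto (fun m =>
          δ ^ 2 / (2 * ((∫ x in Set.Ioi (c m), (w x) ^ 2 ∂ν) - (qs m) ^ 2)))
        Filter.atTop Filter.atTop) := by
  have hanti : Antitone (fun m => Set.Ioi (c m)) := fun i j h => Ioi_subset_Ioi (hcmono h)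
  have hsub : ∀ m, Set.Ioi (c m) ⊆ Set.Ioi (c 0) := fun m => hanti (Nat.zero_le m)
  have hAm : ∀ m : ℕ, MeasurableSet (Set.Ioi (c m)) := fun _ => measurableSet_Ioi
  set S : Set ℝ := ⋂ m, Set.Ioi (c m) with hSdef
  have hS : MeasurableSet S := MeasurableSet.iInter (fun m => hAm m)
  -- μ S = 0
  have hμS : μ S = 0 := by
    have h1 : ∀ m, (μ S).toReal ≤ qs m := fun m => by
      rw [← hq m]
      exact ENNReal.toReal_mono (measure_ne_top μ _) (measure_mono (iInter_subset _ m))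
    have h2 : (μ S).toReal ≤ 0 := ge_of_tendsto hqs0 (Eventually.of_forall h1)
    have h3 : (μ S).toReal = 0 := le_antisymm h2 ENNReal.toReal_nonneg
    exact ((ENNReal.toReal_eq_zero_iff _).mp h3).resolve_right (measure_ne_top μ S)
  -- w = 0 a.e. on S
  have hwS : ∀ᵐ x ∂(ν.restrict S), w x = 0 := by
    have h0 : ∫⁻ x in S, ENNReal.ofReal (w x) ∂ν = 0 := by
      rw [← withDensity_apply _ hS, ← hμν]; exact hμS
    have h1 := (lintegral_eq_zero_iff (hwmeas.ennreal_ofReal)).mp h0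
    filter_upwards [h1] with x hx
    have hx' : ENNReal.ofReal (w x) = 0 := hx
    have : w x ≤ 0 := by simpa [ENNReal.ofReal_eq_zero] using hx'
    exact le_antisymm this (hwnonneg x)
  -- key tendsto lemmas
  have key : ∀ g : ℝ → ℝ, IntegrableOn g (Set.Ioi (c 0)) ν →
      (∀ᵐ x ∂(ν.restrict S), g x = 0) →
      Tendsto (fun m => ∫ x in Set.Ioi (c m), g x ∂ν) atTop (𝓝 0) := by
    intro g hgi hg0
    have h := tendsto_setIntegral_of_antitone (μ := ν) (f := g) hAm hanti ⟨0, hgi⟩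
    have hz : ∫ x in ⋂ n, Set.Ioi (c n), g x ∂ν = 0 := integral_eq_zero_of_ae hg0
    rwa [hz] at h
  have keyμ : ∀ g : ℝ → ℝ, IntegrableOn g (Set.Ioi (c 0)) μ →
      Tendsto (fun m => ∫ x in Set.Ioi (c m), g x ∂μ) atTop (𝓝 0) := by
    intro g hgi
    have h := tendsto_setIntegral_of_antitone (μ := μ) (f := g) hAm hanti ⟨0, hgi⟩
    have hz : ∫ x in ⋂ n, Set.Ioi (c n), g x ∂μ = 0 := by
      rw [Measure.restrict_eq_zero.mpr hμS, integral_zero_measure]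
    rwa [hz] at h
  -- integrabilities
  have habs : ∀ x : ℝ, |x| ≤ x ^ 2 + 1 := fun x => by
    nlinarith [sq_abs x, abs_nonneg x, sq_nonneg (|x| - 1)]
  have hgx1 : ∀ m, IntegrableOn (fun x => x * (w x) ^ 2) (Set.Ioi (c m)) ν := by
    have h0 : IntegrableOn (fun x => x * (w x) ^ 2) (Set.Ioi (c 0)) ν := by
      refine Integrable.mono' (hA3.integrableOn.add (hw2 0))
        ((measurable_id.mul (hwmeas.pow_const 2)).aestronglyMeasurable) ?_
      refine Eventually.of_forall fun x => ?_
      have h1 : |x| * (w x) ^ 2 ≤ (x ^ 2 + 1) * (w x) ^ 2 :=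
        mul_le_mul_of_nonneg_right (habs x) (sq_nonneg _)
      calc ‖x * (w x) ^ 2‖ = |x| * (w x) ^ 2 := by
            rw [Real.norm_eq_abs, abs_mul, abs_of_nonneg (sq_nonneg (w x))]
        _ ≤ (x ^ 2 + 1) * (w x) ^ 2 := h1
        _ = x ^ 2 * (w x) ^ 2 + (w x) ^ 2 := by ring
    exact fun m => h0.mono_set (hsub m)
  have hquad : ∀ (a : ℝ) (m : ℕ),
      IntegrableOn (fun x => (x - a) ^ 2 * (w x) ^ 2) (Set.Ioi (c m)) ν := by
    intro a m
    have e : (fun x => (x - a) ^ 2 * (w x) ^ 2)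
        = fun x => (x ^ 2 * (w x) ^ 2 - (2 * a) * (x * (w x) ^ 2)) + a ^ 2 * (w x) ^ 2 :=
      funext fun x => by ring
    rw [e]
    exact ((hA3.integrableOn).sub ((hgx1 m).const_mul _)).add ((hw2 m).const_mul _)
  have hxint : Integrable (fun x : ℝ => x) μ := by
    refine (hA1.add (integrable_const 1)).mono' aestronglyMeasurable_id ?_
    exact Eventually.of_forall fun x => by rw [Real.norm_eq_abs]; exact habs x
  have hxa : ∀ (a : ℝ) (m : ℕ), IntegrableOn (fun x => x - a) (Set.Ioi (c m)) μ :=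
    fun a m => (hxint.integrableOn).sub (integrableOn_const (measure_lt_top μ _).ne)
  -- the basic convergences
  have TI0 : Tendsto (fun m => ∫ x in Set.Ioi (c m), (w x) ^ 2 ∂ν) atTop (𝓝 0) :=
    key _ (hw2 0) (by filter_upwards [hwS] with x hx; simp [hx])
  have TM' : Tendsto (fun m => ∫ x in Set.Ioi (c m), (x - c 0) ^ 2 * (w x) ^ 2 ∂ν)
      atTop (𝓝 0) :=
    key _ (hquad (c 0) 0) (by filter_upwards [hwS] with x hx; simp [hx])
  have TM : Tendsto (fun m => ∫ x in Set.Ioi (c m), (x - c m) ^ 2 * (w x) ^ 2 ∂ν)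
      atTop (𝓝 0) := by
    refine squeeze_zero (fun m => setIntegral_nonneg (hAm m) fun x _ => by positivity)
      (fun m => ?_) TM'
    refine setIntegral_mono_on (hquad (c m) m) (hquad (c 0) m) (hAm m) fun x hx => ?_
    have h1 : c 0 ≤ c m := hcmono (Nat.zero_le m)
    have h2 : (0:ℝ) ≤ x - c m := by
      have : c m < x := hx
      linarith
    have h3 : (x - c m) ^ 2 ≤ (x - c 0) ^ 2 := pow_le_pow_left₀ h2 (by linarith) 2
    exact mul_le_mul_of_nonneg_right h3 (sq_nonneg _)
  have TK' : Tendsto (fun m => ∫ x in Set.Ioi (c m), (x - c 0) ∂μ) atTop (𝓝 0) :=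
    keyμ _ (hxa (c 0) 0)
  have TK : Tendsto (fun m => ∫ x in Set.Ioi (c m), (x - c m) ∂μ) atTop (𝓝 0) := by
    have hnn : ∀ m, 0 ≤ ∫ x in Set.Ioi (c m), (x - c m) ∂μ := fun m =>
      setIntegral_nonneg (hAm m) fun x hx => by
        have h : c m < x := hx
        linarith
    have hle : ∀ m, (∫ x in Set.Ioi (c m), (x - c m) ∂μ)
        ≤ ∫ x in Set.Ioi (c m), (x - c 0) ∂μ := fun m => by
      refine setIntegral_mono (hxa (c m) m) (hxa (c 0) m) fun x => ?_
      have h1 : c 0 ≤ c m := hcmono (Nat.zero_le m)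
      simp only
      linarith
    exact squeeze_zero hnn hle TK'
  -- per-m identities
  have hKeq : ∀ m, (∫ x in Set.Ioi (c m), x ∂μ) - qs m * c m
      = ∫ x in Set.Ioi (c m), (x - c m) ∂μ := by
    intro m
    rw [integral_sub (hxint.integrableOn)
      (integrableOn_const (measure_lt_top μ _).ne)]
    rw [setIntegral_const, smul_eq_mul, measureReal_def, hq m]
  have hMeq : ∀ m, (c m) ^ 2 * (∫ x in Set.Ioi (c m), (w x) ^ 2 ∂ν) -
      2 * c m * (∫ x in Set.Ioi (c m), x * (w x) ^ 2 ∂ν) +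
      (∫ x in Set.Ioi (c m), x ^ 2 * (w x) ^ 2 ∂ν)
      = ∫ x in Set.Ioi (c m), (x - c m) ^ 2 * (w x) ^ 2 ∂ν := by
    intro m
    have e : (fun x => (x - c m) ^ 2 * (w x) ^ 2)
        = fun x => (x ^ 2 * (w x) ^ 2 - (2 * c m) * (x * (w x) ^ 2))
            + (c m) ^ 2 * (w x) ^ 2 := funext fun x => by ring
    have h1 : ∫ x in Set.Ioi (c m),
        ((x ^ 2 * (w x) ^ 2 - (2 * c m) * (x * (w x) ^ 2)) + (c m) ^ 2 * (w x) ^ 2) ∂ν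
        = (∫ x in Set.Ioi (c m), (x ^ 2 * (w x) ^ 2 - (2 * c m) * (x * (w x) ^ 2)) ∂ν)
          + ∫ x in Set.Ioi (c m), (c m) ^ 2 * (w x) ^ 2 ∂ν :=
      integral_add ((hA3.integrableOn).sub ((hgx1 m).const_mul _)) ((hw2 m).const_mul _)
    have h2 : ∫ x in Set.Ioi (c m),
        (x ^ 2 * (w x) ^ 2 - (2 * c m) * (x * (w x) ^ 2)) ∂ν
        = (∫ x in Set.Ioi (c m), x ^ 2 * (w x) ^ 2 ∂ν)
          - ∫ x in Set.Ioi (c m), (2 * c m) * (x * (w x) ^ 2) ∂ν :=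
      integral_sub hA3.integrableOn ((hgx1 m).const_mul _)
    rw [e, h1, h2, integral_const_mul, integral_const_mul]
    ring
  -- part (c) first
  have hq2 : Tendsto (fun m => (qs m) ^ 2) atTop (𝓝 0) := by
    have := hqs0.mul hqs0
    simpa [pow_two] using this
  have Tc : Tendsto (fun m => (∫ x in Set.Ioi (c m), (w x) ^ 2 ∂ν) - (qs m) ^ 2)
      atTop (𝓝 0) := by
    simpa using TI0.sub hq2
  -- part (b) first
  have Tb : Tendsto (fun m =>
      (c m) ^ 2 * (∫ x in Set.Ioi (c m), (w x) ^ 2 ∂ν) -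
        2 * c m * (∫ x in Set.Ioi (c m), x * (w x) ^ 2 ∂ν) +
        (∫ x in Set.Ioi (c m), x ^ 2 * (w x) ^ 2 ∂ν) -
        ((∫ x in Set.Ioi (c m), x ∂μ) - qs m * c m) ^ 2) atTop (𝓝 0) := by
    have h := TM.sub (TK.mul TK)
    rw [show (0:ℝ) - 0 * 0 = 0 by ring] at h
    refine h.congr fun m => ?_
    rw [← hMeq m, ← hKeq m]
    ring
  -- part (a) first
  have Ta : Tendsto (fun m =>
      (qs m) ^ 2 * ((∫ x in Set.Ioi (c m), (w x) ^ 2 ∂ν) - (qs m) ^ 2) / (f (c m)) ^ 2)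
      atTop (𝓝 0) := by
    have h1 := hA4.tendsto_div_nhds_zero
    have h2 := hA2.tendsto_div_nhds_zero
    have h3 : Tendsto (fun m => ((qs m) ^ 2 / f (c m)) ^ 2) atTop (𝓝 0) := by
      simpa [pow_two] using h2.mul h2
    have h := h1.sub h3
    rw [show (0:ℝ) - 0 = 0 by ring] at h
    refine h.congr fun m => ?_
    rw [div_pow]
    ring
  -- eventual nonvanishing of f
  have hfne : ∀ᶠ m in atTop, f (c m) ≠ 0 := by
    filter_upwards [hA2.def one_pos] with m hm h0
    rw [h0] at hm
    rw [Real.norm_eq_abs, abs_of_nonneg (sq_nonneg _)] at hm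
    have := hqspos m
    simp at hm
    nlinarith
  refine ⟨⟨Ta, fun δ hδ => ?_⟩, ⟨Tb, fun δ hδ => ?_⟩, ⟨Tc, fun δ hδ => ?_⟩⟩
  · -- κ₁
    have h1 : Tendsto (fun m =>
        (qs m) ^ 2 * ((∫ x in Set.Ioi (c m), (w x) ^ 2 ∂ν) - (qs m) ^ 2) / (f (c m)) ^ 2)
        atTop (𝓝[>] 0) := by
      refine tendsto_nhdsWithin_iff.mpr ⟨Ta, ?_⟩
      filter_upwards [hfne] with m hm
      have h2 : (0:ℝ) < (f (c m)) ^ 2 := by positivity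
      exact mem_Ioi.mpr (div_pos (mul_pos (pow_pos (hqspos m) 2) (hpos1 m)) h2)
    have h2 := h1.inv_tendsto_nhdsGT_zero
    have h3 := Tendsto.const_mul_atTop (show (0:ℝ) < δ ^ 2 / 2 by positivity) h2
    refine h3.congr fun m => ?_
    simp only [Pi.inv_apply, inv_div]
  · -- κ₂
    have h1 : Tendsto (fun m =>
        (c m) ^ 2 * (∫ x in Set.Ioi (c m), (w x) ^ 2 ∂ν) -
          2 * c m * (∫ x in Set.Ioi (c m), x * (w x) ^ 2 ∂ν) +
          (∫ x in Set.Ioi (c m), x ^ 2 * (w x) ^ 2 ∂ν) -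
          ((∫ x in Set.Ioi (c m), x ∂μ) - qs m * c m) ^ 2) atTop (𝓝[>] 0) :=
      tendsto_nhdsWithin_iff.mpr ⟨Tb, Eventually.of_forall fun m => mem_Ioi.mpr (hpos2 m)⟩
    have h2 := h1.inv_tendsto_nhdsGT_zero
    have h3 := Tendsto.const_mul_atTop (show (0:ℝ) < δ ^ 2 / 2 by positivity) h2
    exact h3.congr fun m => rfl
  · -- κ₃
    have h1 : Tendsto (fun m =>
        2 * ((∫ x in Set.Ioi (c m), (w x) ^ 2 ∂ν) - (qs m) ^ 2)) atTop (𝓝[>] 0) := by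
      refine tendsto_nhdsWithin_iff.mpr ⟨?_, Eventually.of_forall fun m => ?_⟩
      · simpa using Tc.const_mul 2
      · have := hpos1 m
        exact mem_Ioi.mpr (by linarith)
    have h2 := h1.inv_tendsto_nhdsGT_zero
    have h3 := Tendsto.const_mul_atTop (show (0:ℝ) < δ ^ 2 by positivity) h2
    refine h3.congr fun m => ?_
    rw [Pi.inv_apply, div_eq_mul_inv]

/-- **Divergence of the optimal values `κ₁, κ₂, κ₃`** (end of proof of Lemma 4.7).
Under (A1)–(A4), writing `c_m = T⁻¹(q_m)`: (a) `q_m²(E_ν[w²1{X>c_m}] − q_m²)/f(c_m)² → 0`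
so `κ₁(q_m,δ) → ∞`; (b) `c_m²E_ν[w²1] − 2c_mE_ν[Xw²1] + E_ν[X²w²1] − (E_μ[X1] − q_mc_m)²
→ 0` so `κ₂(q_m,δ) → ∞`; (c) `E_ν[w²1{X>c_m}] − q_m² → 0` so `κ₃(q_m,δ) → ∞`. -/
theorem kappa_divergence
    (ν : Measure ℝ) [IsProbabilityMeasure ν]
    (w : ℝ → ℝ) (hwmeas : Measurable w) (hwnonneg : ∀ x, 0 ≤ w x)
    (μ : Measure ℝ) [IsProbabilityMeasure μ]
    (hμν : μ = ν.withDensity (fun x => ENNReal.ofReal (w x)))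
    (qs : ℕ → ℝ) (hqsanti : Antitone qs)
    (hqs0 : Filter.Tendsto qs Filter.atTop (𝓝 0))
    (hqspos : ∀ m, 0 < qs m) (hqslt : ∀ m, qs m < 1)
    (hqscont : ∀ m, tailT μ (rcInv (tailT μ) (qs m)) = qs m)
    (f : ℝ → ℝ)
    -- (A1): `μ` has a finite second moment
    (hA1 : Integrable (fun x : ℝ => x ^ 2) μ)
    -- (A2): `q_m² = o(f(T⁻¹(q_m)))`
    (hA2 : (fun m => (qs m) ^ 2) =o[Filter.atTop]
      (fun m => f (rcInv (tailT μ) (qs m))))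
    -- (A3): `E_ν[(X w(X))²] < ∞`
    (hA3 : Integrable (fun x : ℝ => x ^ 2 * (w x) ^ 2) ν)
    -- (A4): `q_m² E_ν[w(X)² 1{X > T⁻¹(q_m)}] = o(f(T⁻¹(q_m))²)`
    (hA4 : (fun m => (qs m) ^ 2 *
        ∫ x in Set.Ioi (rcInv (tailT μ) (qs m)), (w x) ^ 2 ∂ν) =o[Filter.atTop]
      (fun m => (f (rcInv (tailT μ) (qs m))) ^ 2))
    -- finiteness and (implicit) nondegeneracy of the variance terms
    (hw2 : ∀ m, IntegrableOn (fun x => (w x) ^ 2) (Set.Ioi (rcInv (tailT μ) (qs m))) ν)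
    (hpos1 : ∀ m,
      0 < (∫ x in Set.Ioi (rcInv (tailT μ) (qs m)), (w x) ^ 2 ∂ν) - (qs m) ^ 2)
    (hpos2 : ∀ m,
      0 < (rcInv (tailT μ) (qs m)) ^ 2 *
            (∫ x in Set.Ioi (rcInv (tailT μ) (qs m)), (w x) ^ 2 ∂ν) -
          2 * rcInv (tailT μ) (qs m) *
            (∫ x in Set.Ioi (rcInv (tailT μ) (qs m)), x * (w x) ^ 2 ∂ν) +
          (∫ x in Set.Ioi (rcInv (tailT μ) (qs m)), x ^ 2 * (w x) ^ 2 ∂ν) -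
          ((∫ x in Set.Ioi (rcInv (tailT μ) (qs m)), x ∂μ) -
            qs m * rcInv (tailT μ) (qs m)) ^ 2) :
    -- (a) `κ₁(q_m, δ) → ∞`
    (Filter.Tendsto (fun m =>
        (qs m) ^ 2 *
          ((∫ x in Set.Ioi (rcInv (tailT μ) (qs m)), (w x) ^ 2 ∂ν) - (qs m) ^ 2) /
          (f (rcInv (tailT μ) (qs m))) ^ 2)
      Filter.atTop (𝓝 0) ∧
      ∀ δ > (0:ℝ), Filter.Tendsto (fun m =>
          δ ^ 2 / 2 * ((f (rcInv (tailT μ) (qs m))) ^ 2 /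
            ((qs m) ^ 2 *
              ((∫ x in Set.Ioi (rcInv (tailT μ) (qs m)), (w x) ^ 2 ∂ν) -
                (qs m) ^ 2))))
        Filter.atTop Filter.atTop) ∧
    -- (b) `κ₂(q_m, δ) → ∞`
    (Filter.Tendsto (fun m =>
        (rcInv (tailT μ) (qs m)) ^ 2 *
            (∫ x in Set.Ioi (rcInv (tailT μ) (qs m)), (w x) ^ 2 ∂ν) -
          2 * rcInv (tailT μ) (qs m) *
            (∫ x in Set.Ioi (rcInv (tailT μ) (qs m)), x * (w x) ^ 2 ∂ν) +
          (∫ x in Set.Ioi (rcInv (tailT μ) (qs m)), x ^ 2 * (w x) ^ 2 ∂ν) -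
          ((∫ x in Set.Ioi (rcInv (tailT μ) (qs m)), x ∂μ) -
            qs m * rcInv (tailT μ) (qs m)) ^ 2)
      Filter.atTop (𝓝 0) ∧
      ∀ δ > (0:ℝ), Filter.Tendsto (fun m =>
          δ ^ 2 / 2 *
            ((rcInv (tailT μ) (qs m)) ^ 2 *
                (∫ x in Set.Ioi (rcInv (tailT μ) (qs m)), (w x) ^ 2 ∂ν) -
              2 * rcInv (tailT μ) (qs m) *
                (∫ x in Set.Ioi (rcInv (tailT μ) (qs m)), x * (w x) ^ 2 ∂ν) +
              (∫ x in Set.Ioi (rcInv (tailT μ) (qs m)), x ^ 2 * (w x) ^ 2 ∂ν) -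
              ((∫ x in Set.Ioi (rcInv (tailT μ) (qs m)), x ∂μ) -
                qs m * rcInv (tailT μ) (qs m)) ^ 2)⁻¹)
        Filter.atTop Filter.atTop) ∧
    -- (c) `κ₃(q_m, δ) → ∞`
    (Filter.Tendsto (fun m =>
        (∫ x in Set.Ioi (rcInv (tailT μ) (qs m)), (w x) ^ 2 ∂ν) - (qs m) ^ 2)
      Filter.atTop (𝓝 0) ∧
      ∀ δ > (0:ℝ), Filter.Tendsto (fun m =>
          δ ^ 2 / (2 *
            ((∫ x in Set.Ioi (rcInv (tailT μ) (qs m)), (w x) ^ 2 ∂ν) - (qs m) ^ 2)))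
        Filter.atTop Filter.atTop) := by
  have hTanti : Antitone (tailT μ) := fun a b hab =>
    ENNReal.toReal_mono (measure_ne_top μ _) (measure_mono (Ioi_subset_Ioi hab))
  -- tail tends to 0 at +∞ and to 1 at -∞ (along integers)
  have hT_top : Tendsto (fun n : ℕ => tailT μ (n : ℝ)) atTop (𝓝 0) := by
    have h1 : Tendsto (fun n : ℕ => μ (Set.Ioi (n : ℝ))) atTop (𝓝 0) := by
      have h := tendsto_measure_iInter_atTop (μ := μ) (s := fun n : ℕ => Set.Ioi (n : ℝ))
        (fun n => measurableSet_Ioi.nullMeasurableSet)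
        (fun i j hij => Ioi_subset_Ioi (by exact_mod_cast hij))
        ⟨0, measure_ne_top μ _⟩
      have hemp : ⋂ n : ℕ, Set.Ioi ((n : ℝ)) = ∅ := by
        ext x
        simp only [mem_iInter, mem_Ioi, mem_empty_iff_false, iff_false, not_forall, not_lt]
        obtain ⟨n, hn⟩ := exists_nat_gt x
        exact ⟨n, hn.le⟩
      rwa [hemp, measure_empty] at h
    have h2 := (ENNReal.tendsto_toReal (by simp)).comp h1
    simpa [tailT, Function.comp_def] using h2
  have hT_bot : Tendsto (fun n : ℕ => tailT μ (-(n : ℝ))) atTop (𝓝 1) := by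
    have h1 : Tendsto (fun n : ℕ => μ (Set.Ioi (-(n : ℝ)))) atTop (𝓝 1) := by
      have h := tendsto_measure_iUnion_atTop (μ := μ) (s := fun n : ℕ => Set.Ioi (-(n : ℝ)))
        (fun i j hij => Ioi_subset_Ioi (by simp; exact_mod_cast hij))
      have huniv : ⋃ n : ℕ, Set.Ioi (-(n : ℝ)) = Set.univ := by
        ext x
        simp only [mem_iUnion, mem_Ioi, mem_univ, iff_true]
        obtain ⟨n, hn⟩ := exists_nat_gt (-x)
        exact ⟨n, by linarith⟩
      rw [huniv, measure_univ] at h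
      exact h
    have h2 := (ENNReal.tendsto_toReal (by simp)).comp h1
    simpa [tailT, Function.comp_def] using h2
  have hSne : ∀ m, {u : ℝ | tailT μ u ≤ qs m}.Nonempty := by
    intro m
    obtain ⟨n, hn⟩ := (hT_top.eventually (gt_mem_nhds (hqspos m))).exists
    exact ⟨(n : ℝ), hn.le⟩
  have hSbdd : ∀ m, BddBelow {u : ℝ | tailT μ u ≤ qs m} := by
    intro m
    obtain ⟨n, hn⟩ := (hT_bot.eventually (lt_mem_nhds (hqslt m))).exists
    refine ⟨-(n : ℝ), fun u hu => ?_⟩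
    by_contra hlt
    push_neg at hlt
    have h2 := hTanti hlt.le
    have h3 : tailT μ u ≤ qs m := hu
    linarith
  have hcmono : Monotone (fun m => rcInv (tailT μ) (qs m)) := by
    intro i j hij
    exact csInf_le_csInf (hSbdd i) (hSne j) (fun u hu => le_trans hu (hqsanti hij))
  have hq : ∀ m, (μ (Set.Ioi (rcInv (tailT μ) (qs m)))).toReal = qs m := fun m => hqscont m
  exact kappa_aux ν w hwmeas hwnonneg μ hμν qs hqs0 hqspos _ hcmono hq f hA1 hA2 hA3 hA4
    hw2 hpos1 hpos2
end
end
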